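/- arXiv:2210.12159 — 9 statements merged into one kernel-verified Lean document; each statement's English description precedes it below -/
import Mathlib

section
/- For every non-negative integer n and every integer s, 2 * ∑_{k=0}^{⌊n/2⌋} C(n, 2k) * F(2k+s) = F(2n+s) - (-1)^s * F(n-s), where F denotes the Fibonacci sequence extended to all integers via F(-j) = (-1)^(j-1) F(j). -/
open Finset

private lemma pascal_sum' (n : ℕ) (f : ℕ → ℤ) :
    ∑ k ∈ range (n+2), ((n+1).choose k : ℤ) * f k
      = ∑ k ∈ range (n+1), (n.choose k : ℤ) * f k
        + ∑ k ∈ range (n+1), (n.choose k : ℤ) * f (k+1) := by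
  rw [Finset.sum_range_succ' (fun k => ((n+1).choose k : ℤ) * f k) (n+1)]
  simp only [Nat.choose_succ_succ, Nat.cast_add, add_mul, Nat.choose_zero_right, Nat.cast_one,
    one_mul]
  rw [Finset.sum_add_distrib]
  have h1 : (∑ k ∈ range (n+1), (n.choose (k+1) : ℤ) * f (k+1)) + f 0
      = ∑ k ∈ range (n+1), (n.choose k : ℤ) * f k := by
    have := (Finset.sum_range_succ' (fun k => (n.choose k : ℤ) * f k) (n+1)).symm
    simp only [Nat.choose_zero_right, Nat.cast_one, one_mul] at this
    rw [this, Finset.sum_range_succ]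
    simp [Nat.choose_succ_self]
  linarith

private lemma e_if (s : ℤ) : ((-1 : ℤ) ^ s.natAbs) = if Even s then 1 else -1 := by
  by_cases h : Even s
  · rw [if_pos h, Even.neg_one_pow (Int.natAbs_even.mpr h)]
  · rw [if_neg h, Odd.neg_one_pow]
    exact Int.natAbs_odd.mpr (Int.not_even_iff_odd.mp h)

private lemma e_succ (s : ℤ) : ((-1 : ℤ) ^ (s+1).natAbs) = -((-1 : ℤ) ^ s.natAbs) := by
  rw [e_if, e_if]
  by_cases h : Even s
  · rw [if_pos h, if_neg (by simp [Int.even_add_one, h])]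
  · rw [if_neg h, if_pos (Int.even_add_one.mpr h)]; ring

private lemma sumA (F : ℤ → ℤ) (hF : ∀ j : ℤ, F j = F (j - 1) + F (j - 2)) :
    ∀ (n : ℕ) (s : ℤ), ∑ k ∈ range (n+1), (n.choose k : ℤ) * F ((k : ℤ) + s)
      = F (2 * n + s) := by
  intro n
  induction n with
  | zero => intro s; simp
  | succ n ih =>
    intro s
    have hp := pascal_sum' n (fun k => F ((k : ℤ) + s))
    rw [show n + 1 + 1 = n + 2 from rfl, hp]
    have h1 : ∑ k ∈ range (n+1), (n.choose k : ℤ) * F ((k : ℤ) + s) = F (2*n + s) := ih s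
    have h2 : ∑ k ∈ range (n+1), (n.choose k : ℤ) * F (((k+1 : ℕ) : ℤ) + s)
        = F (2*n + (s+1)) := by
      rw [← ih (s+1)]; apply Finset.sum_congr rfl; intro k _; push_cast; ring_nf
    rw [h1, h2]
    have hr := hF (2*(n:ℤ) + s + 2)
    have e1 : (2*(n:ℤ) + s + 2) - 1 = 2*n + (s+1) := by ring
    have e2 : (2*(n:ℤ) + s + 2) - 2 = 2*n + s := by ring
    rw [e1, e2] at hr
    push_cast
    rw [show 2 * ((n:ℤ)+1) + s = 2*(n:ℤ) + s + 2 by ring, hr]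
    ring

private lemma keypair (F : ℤ → ℤ) (hF0 : F 0 = 0) (hF1 : F 1 = 1)
    (hF : ∀ j : ℤ, F j = F (j - 1) + F (j - 2)) :
    ∀ m : ℕ, F (-(m:ℤ)) = (-1)^(m+1) * F m ∧ F (-(m:ℤ)-1) = (-1)^(m+2) * F ((m:ℤ)+1) := by
  intro m
  induction m with
  | zero =>
    refine ⟨by simp [hF0], ?_⟩
    have h := hF 1
    rw [show (1:ℤ)-1 = 0 by ring, show (1:ℤ)-2 = -1 by ring, hF0, hF1] at h
    simp only [Nat.cast_zero, neg_zero, zero_sub, zero_add, pow_two]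
    rw [hF1]
    norm_num
    linarith
  | succ m ih =>
    obtain ⟨h1, h2⟩ := ih
    constructor
    · have e : -((m:ℤ)+1) = -(m:ℤ) - 1 := by ring
      push_cast
      rw [e, h2]
    · have hr := hF (-(m:ℤ))
      have e1 : -(m:ℤ) - 2 = -((m:ℤ)+1) - 1 := by ring
      rw [e1] at hr
      have hr2 := hF ((m:ℤ)+2)
      rw [show ((m:ℤ)+2) - 1 = (m:ℤ)+1 by ring, show ((m:ℤ)+2) - 2 = (m:ℤ) by ring] at hr2
      push_cast
      have hx : F (-((m:ℤ)+1) - 1) = F (-(m:ℤ)) - F (-(m:ℤ)-1) := by linarith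
      rw [hx, h1, h2, show (m:ℤ) + 1 + 1 = (m:ℤ) + 2 by ring, hr2]
      ring

private lemma keyneg (F : ℤ → ℤ) (hF0 : F 0 = 0) (hF1 : F 1 = 1)
    (hF : ∀ j : ℤ, F j = F (j - 1) + F (j - 2)) (s : ℤ) :
    F (-s) = -((-1 : ℤ) ^ s.natAbs) * F s := by
  have key := keypair F hF0 hF1 hF
  rcases Int.natAbs_eq s with h | h
  · rw [h, (key s.natAbs).1]
    simp only [Int.natAbs_natCast]
    rw [pow_succ]; ring
  · rw [h]
    simp only [neg_neg, Int.natAbs_neg, Int.natAbs_natCast]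
    rw [(key s.natAbs).1]
    have hsq : ((-1:ℤ))^s.natAbs * ((-1:ℤ))^s.natAbs = 1 := by
      rw [← pow_add]; exact Even.neg_one_pow (Even.add_self _)
    linear_combination (-(F (s.natAbs : ℤ))) * hsq

private lemma sumB (F : ℤ → ℤ) (hF0 : F 0 = 0) (hF1 : F 1 = 1)
    (hF : ∀ j : ℤ, F j = F (j - 1) + F (j - 2)) :
    ∀ (n : ℕ) (s : ℤ), ∑ k ∈ range (n+1), (-1)^k * (n.choose k : ℤ) * F ((k : ℤ) + s)
      = -((-1 : ℤ) ^ s.natAbs) * F ((n : ℤ) - s) := by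
  intro n
  induction n with
  | zero =>
    intro s
    simp only [zero_add, Finset.sum_range_one, pow_zero, Nat.choose_zero_right, Nat.cast_one,
      one_mul, Nat.cast_zero, Int.ofNat_zero, zero_sub, Nat.cast_ofNat, CharP.cast_eq_zero]
    rw [keyneg F hF0 hF1 hF s]
    have hsq : ((-1 : ℤ) ^ s.natAbs) * ((-1 : ℤ) ^ s.natAbs) = 1 := by
      rw [← pow_add]; exact Even.neg_one_pow (Even.add_self _)
    linear_combination (-(F s)) * hsq
  | succ n ih =>
    intro s
    have hp := pascal_sum' n (fun k => (-1)^k * F ((k : ℤ) + s))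
    have expand : ∑ k ∈ range (n+2), ((n+1).choose k : ℤ) * ((-1)^k * F ((k : ℤ) + s))
        = ∑ k ∈ range (n+2), (-1)^k * ((n+1).choose k : ℤ) * F ((k : ℤ) + s) := by
      apply Finset.sum_congr rfl; intro k _; ring
    rw [show n + 1 + 1 = n + 2 from rfl, ← expand, hp]
    have h1 : ∑ k ∈ range (n+1), (n.choose k : ℤ) * ((-1)^k * F ((k : ℤ) + s))
        = -((-1 : ℤ) ^ s.natAbs) * F ((n : ℤ) - s) := by
      rw [← ih s]; apply Finset.sum_congr rfl; intro k _; ring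
    have h2 : ∑ k ∈ range (n+1), (n.choose k : ℤ) * ((-1)^(k+1) * F (((k+1 : ℕ) : ℤ) + s))
        = -(-((-1 : ℤ) ^ (s+1).natAbs) * F ((n : ℤ) - (s+1))) := by
      rw [← ih (s+1), ← Finset.sum_neg_distrib]
      apply Finset.sum_congr rfl; intro k _; push_cast; ring
    rw [h1, h2, e_succ]
    have hr := hF ((n:ℤ) + 1 - s)
    rw [show ((n:ℤ) + 1 - s) - 1 = (n:ℤ) - s by ring,
        show ((n:ℤ) + 1 - s) - 2 = (n:ℤ) - (s+1) by ring] at hr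
    push_cast
    rw [show (n:ℤ) + 1 - s = ((n:ℤ)+1-s) by ring, hr]
    ring

theorem stmt0 (F : ℤ → ℤ) (hF0 : F 0 = 0) (hF1 : F 1 = 1)
    (hF : ∀ j : ℤ, F j = F (j - 1) + F (j - 2)) (n : ℕ) (s : ℤ) :
    2 * ∑ k ∈ Finset.range (n / 2 + 1), (n.choose (2 * k) : ℤ) * F (2 * (k : ℤ) + s)
      = F (2 * (n : ℤ) + s) - (-1 : ℤ) ^ s.natAbs * F ((n : ℤ) - s) := by
  have hA := sumA F hF n s
  have hB := sumB F hF0 hF1 hF n s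
  have combine : ∑ k ∈ range (n+1), (n.choose k : ℤ) * F ((k : ℤ) + s)
      + ∑ k ∈ range (n+1), (-1)^k * (n.choose k : ℤ) * F ((k : ℤ) + s)
      = ∑ k ∈ range (n+1), (if Even k then 2 * ((n.choose k : ℤ) * F ((k : ℤ) + s)) else 0) := by
    rw [← Finset.sum_add_distrib]
    apply Finset.sum_congr rfl
    intro k _
    by_cases hk : Even k
    · rw [if_pos hk, Even.neg_one_pow hk]; ring
    · rw [if_neg hk, Odd.neg_one_pow (Nat.not_even_iff_odd.mp hk)]; ring
  have reindex : ∑ k ∈ range (n+1), (if Even k then 2 * ((n.choose k : ℤ) * F ((k : ℤ) + s)) else 0)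
      = ∑ j ∈ range (n/2+1), 2 * ((n.choose (2*j) : ℤ) * F (((2*j : ℕ) : ℤ) + s)) := by
    rw [← Finset.sum_filter]
    apply Finset.sum_nbij' (i := fun k => k / 2) (j := fun j => 2 * j)
    · intro k hk
      simp only [Finset.mem_filter, Finset.mem_range] at hk
      simp only [Finset.mem_range]
      omega
    · intro j hj
      simp only [Finset.mem_range] at hj
      simp only [Finset.mem_filter, Finset.mem_range]
      exact ⟨by omega, even_two_mul j⟩
    · intro k hk
      simp only [Finset.mem_filter] at hk
      obtain ⟨-, m, hm⟩ := hk
      omega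
    · intro j _
      omega
    · intro k hk
      simp only [Finset.mem_filter] at hk
      obtain ⟨-, m, hm⟩ := hk
      have : 2 * (k / 2) = k := by omega
      rw [this]
  rw [hA, hB] at combine
  have final : ∑ j ∈ range (n/2+1), 2 * ((n.choose (2*j) : ℤ) * F (((2*j : ℕ) : ℤ) + s))
      = 2 * ∑ j ∈ range (n/2+1), (n.choose (2*j) : ℤ) * F (2 * (j : ℤ) + s) := by
    rw [Finset.mul_sum]
    apply Finset.sum_congr rfl
    intro j _
    push_cast
    ring_nf
  rw [← final, ← reindex, ← combine]
  ring
end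

section
/- For every non-negative integer n and every integer s, 2 * ∑_{k=0}^{⌊n/2⌋} C(n, 2k) * L(6k+s) = 2^n * (L(2n+s) + (-1)^n * L(n+s)). -/
lemma lucas_step3 (L : ℤ → ℤ) (hL : ∀ j : ℤ, L j = L (j - 1) + L (j - 2)) (m : ℤ) :
    L (m + 3) = L (m + 2) + L (m + 1) ∧ L (m + 2) = L (m + 1) + L m := by
  constructor
  · have := hL (m + 3); simpa [show m + 3 - 1 = m + 2 by ring, show m + 3 - 2 = m + 1 by ring] using this
  · have := hL (m + 2); simpa [show m + 2 - 1 = m + 1 by ring, show m + 2 - 2 = m by ring] using this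

lemma key (L : ℤ → ℤ) (hL : ∀ j : ℤ, L j = L (j - 1) + L (j - 2)) :
    ∀ n : ℕ, ∀ s : ℤ,
      (∑ k ∈ Finset.range (n + 1), (n.choose k : ℤ) * L (3 * k + s) = 2 ^ n * L (2 * n + s)) ∧
      (∑ k ∈ Finset.range (n + 1), (-1 : ℤ) ^ k * (n.choose k : ℤ) * L (3 * k + s)
        = (-2) ^ n * L (n + s)) := by
  intro n
  induction n with
  | zero => intro s; simp
  | succ n ih =>
    intro s
    have pascal : ∀ f : ℕ → ℤ,
        ∑ k ∈ Finset.range (n + 2), ((n+1).choose k : ℤ) * f k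
          = (∑ k ∈ Finset.range (n + 1), (n.choose k : ℤ) * f k)
            + ∑ k ∈ Finset.range (n + 1), (n.choose k : ℤ) * f (k + 1) := by
      intro f
      rw [Finset.sum_range_succ' (fun k => ((n+1).choose k : ℤ) * f k)]
      have : ∀ k, ((n+1).choose (k+1) : ℤ) = (n.choose k : ℤ) + (n.choose (k+1) : ℤ) := by
        intro k; exact_mod_cast congrArg (Nat.cast (R := ℤ)) (Nat.choose_succ_succ n k)
      simp only [this]
      have h2 : ∑ k ∈ Finset.range (n + 1), ((n.choose k : ℤ) + (n.choose (k+1) : ℤ)) * f (k+1)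
          = ∑ k ∈ Finset.range (n + 1), (n.choose k : ℤ) * f (k+1)
            + ∑ k ∈ Finset.range (n + 1), (n.choose (k+1) : ℤ) * f (k+1) := by
        rw [← Finset.sum_add_distrib]; congr 1; ext k; ring
      rw [h2]
      have h3 : ∑ k ∈ Finset.range (n + 1), (n.choose (k+1) : ℤ) * f (k+1) + ((n+1).choose 0 : ℤ) * f 0
          = ∑ k ∈ Finset.range (n + 1), (n.choose k : ℤ) * f k := by
        rw [Finset.sum_range_succ' (fun k => (n.choose k : ℤ) * f k)]
        simp only [Nat.choose_succ_succ, Nat.choose_zero_right, Nat.cast_one, one_mul,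
          Nat.choose_self]
        rw [Finset.sum_range_succ (fun k => (n.choose (k+1) : ℤ) * f (k+1))]
        simp
      linarith [h3]
    have hstep := lucas_step3 L hL
    constructor
    · have hp := pascal (fun k => L (3 * k + s))
      have hsum : ∑ k ∈ Finset.range (n + 1), (n.choose k : ℤ) * L (3 * ((k : ℤ) + 1) + s)
          = ∑ k ∈ Finset.range (n + 1), (n.choose k : ℤ) * L (3 * k + (s + 3)) := by
        apply Finset.sum_congr rfl; intro k _; congr 1; ring
      have IH1 := (ih s).1
      have IH2 := (ih (s + 3)).1
      have harg : (2 : ℤ) * n + (s + 3) = (2 * n + s) + 3 := by ring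
      simp only [Nat.cast_add, Nat.cast_one] at hp ⊢
      rw [hp, hsum, IH1, IH2, harg]
      have hg : L (2 * ((n:ℤ) + 1) + s) = L ((2 * n + s) + 2) := by congr 1; ring
      rw [hg]
      have h1 := (hstep (2 * (n:ℤ) + s)).1
      have h2 := (hstep (2 * (n:ℤ) + s)).2
      linear_combination (2:ℤ) ^ n * (h1 - h2)
    · have hp := pascal (fun k => (-1 : ℤ) ^ k * L (3 * k + s))
      have hsum : ∑ k ∈ Finset.range (n + 1), (n.choose k : ℤ) * ((-1:ℤ) ^ (k+1) * L (3 * ((k:ℤ) + 1) + s))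
          = -∑ k ∈ Finset.range (n + 1), (-1:ℤ) ^ k * (n.choose k : ℤ) * L (3 * k + (s + 3)) := by
        rw [← Finset.sum_neg_distrib]
        apply Finset.sum_congr rfl; intro k _
        have : (3:ℤ) * ((k:ℤ) + 1) + s = 3 * k + (s + 3) := by ring
        rw [this, pow_succ]; ring
      have hre : ∑ k ∈ Finset.range (n + 1), (n.choose k : ℤ) * ((-1:ℤ) ^ k * L (3 * (k:ℤ) + s))
          = ∑ k ∈ Finset.range (n + 1), (-1:ℤ) ^ k * (n.choose k : ℤ) * L (3 * (k:ℤ) + s) := by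
        apply Finset.sum_congr rfl; intro k _; ring
      have IH1 := (ih s).2
      have IH2 := (ih (s + 3)).2
      have harg : (n : ℤ) + (s + 3) = ((n:ℤ) + s) + 3 := by ring
      have hA : ∑ k ∈ Finset.range (n + 1 + 1), (-1:ℤ) ^ k * ((n+1).choose k : ℤ) * L (3 * (k:ℤ) + s)
          = ∑ k ∈ Finset.range (n + 2), ((n+1).choose k : ℤ) * ((-1:ℤ) ^ k * L (3 * (k:ℤ) + s)) := by
        apply Finset.sum_congr rfl; intro k _; ring
      simp only [Nat.cast_add, Nat.cast_one] at hp ⊢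
      rw [hA, hp, hsum, hre, IH1, IH2, harg]
      have hg : L ((n:ℤ) + 1 + s) = L (((n:ℤ) + s) + 1) := by congr 1; ring
      rw [hg]
      have h1 := (hstep ((n:ℤ) + s)).1
      have h2 := (hstep ((n:ℤ) + s)).2
      linear_combination ((-2:ℤ)) ^ n * (- h1 - h2)

theorem stmt3 (L : ℤ → ℤ) (hL0 : L 0 = 2) (hL1 : L 1 = 1)
    (hL : ∀ j : ℤ, L j = L (j - 1) + L (j - 2)) (n : ℕ) (s : ℤ) :
    2 * ∑ k ∈ Finset.range (n / 2 + 1), (n.choose (2 * k) : ℤ) * L (6 * (k : ℤ) + s)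
      = 2 ^ n * (L (2 * (n : ℤ) + s) + (-1 : ℤ) ^ n * L ((n : ℤ) + s)) := by
  obtain ⟨hA, hB⟩ := key L hL n s
  have hmain : ∑ k ∈ Finset.range (n + 1), ((1 + (-1:ℤ)^k) * (n.choose k : ℤ) * L (3 * (k:ℤ) + s))
      = 2 ^ n * L (2 * (n:ℤ) + s) + (-2:ℤ) ^ n * L ((n:ℤ) + s) := by
    rw [← hA, ← hB, ← Finset.sum_add_distrib]
    apply Finset.sum_congr rfl; intro k _; ring
  have hfil : ∑ k ∈ Finset.range (n + 1), ((1 + (-1:ℤ)^k) * (n.choose k : ℤ) * L (3 * (k:ℤ) + s))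
      = ∑ k ∈ (Finset.range (n + 1)).filter (fun k => Even k),
          ((1 + (-1:ℤ)^k) * (n.choose k : ℤ) * L (3 * (k:ℤ) + s)) := by
    rw [Finset.sum_filter]
    apply Finset.sum_congr rfl; intro k _
    by_cases h : Even k
    · simp [h]
    · have : (-1:ℤ)^k = -1 := Odd.neg_one_pow (Nat.not_even_iff_odd.mp h)
      simp [h, this]
  have hbij : ∑ k ∈ (Finset.range (n + 1)).filter (fun k => Even k),
          ((1 + (-1:ℤ)^k) * (n.choose k : ℤ) * L (3 * (k:ℤ) + s))
      = ∑ j ∈ Finset.range (n / 2 + 1), 2 * ((n.choose (2 * j) : ℤ) * L (6 * (j:ℤ) + s)) := by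
    apply Finset.sum_nbij' (i := fun k => k / 2) (j := fun j => 2 * j)
    · intro k hk
      simp only [Finset.mem_filter, Finset.mem_range] at hk
      simp only [Finset.mem_range]
      omega
    · intro j hj
      simp only [Finset.mem_range] at hj
      simp only [Finset.mem_filter, Finset.mem_range]
      constructor
      · omega
      · exact even_two_mul j
    · intro k hk
      simp only [Finset.mem_filter, Finset.mem_range] at hk
      obtain ⟨m, hm⟩ := hk.2
      omega
    · intro j _; omega
    · intro k hk
      simp only [Finset.mem_filter, Finset.mem_range] at hk
      obtain ⟨m, hm⟩ := hk.2
      have hk2 : 2 * (k / 2) = k := by omega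
      have : (-1:ℤ)^k = 1 := Even.neg_one_pow hk.2
      rw [this, hk2]
      have : (6:ℤ) * ((k / 2 : ℕ) : ℤ) = 3 * (k : ℤ) := by
        push_cast [hk2]
        omega
      rw [this]
      ring
  rw [Finset.mul_sum]
  rw [← hbij, ← hfil, hmain]
  have : (-2:ℤ)^n = (-1:ℤ)^n * 2^n := by rw [← neg_one_mul, mul_pow]
  rw [this]; ring
end

section
/- For every non-negative integer n and all integers s and j, 2 * ∑_{k=0}^{n} C(2n, 2k) * F(j(4k+s)) = (L(j)^(2n) + 5^n * F(j)^(2n)) * F(j(2n+s)). -/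
noncomputable def phi : ℝ := (1 + Real.sqrt 5) / 2
noncomputable def psi : ℝ := (1 - Real.sqrt 5) / 2

lemma sqrt5_sq : Real.sqrt 5 ^ 2 = 5 := Real.sq_sqrt (by norm_num)
lemma sqrt5_pos : 0 < Real.sqrt 5 := Real.sqrt_pos.2 (by norm_num)

lemma phi_sq : phi ^ 2 = phi + 1 := by
  unfold phi; field_simp; nlinarith [sqrt5_sq]

lemma psi_sq : psi ^ 2 = psi + 1 := by
  unfold psi; field_simp; nlinarith [sqrt5_sq]

lemma phi_ne : phi ≠ 0 := by
  unfold phi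
  have := sqrt5_pos
  positivity

lemma psi_ne : psi ≠ 0 := by
  unfold psi
  have h := sqrt5_sq
  intro hc
  nlinarith [sqrt5_pos]

lemma phi_mul_psi : phi * psi = -1 := by
  unfold phi psi; nlinarith [sqrt5_sq]

lemma phi_add_psi : phi + psi = 1 := by unfold phi psi; ring

lemma phi_sub_psi : phi - psi = Real.sqrt 5 := by unfold phi psi; ring

lemma rep (x : ℝ) (hx : x ≠ 0) (hsq : x ^ 2 = x + 1)
    (F : ℤ → ℤ) (hF0 : F 0 = 0) (hF1 : F 1 = 1)
    (hF : ∀ j : ℤ, F j = F (j - 1) + F (j - 2)) (t : ℤ) :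
    x ^ t = (F t : ℝ) * x + (F (t - 1) : ℝ) := by
  have hFm1 : F (-1) = 1 := by have h := hF 1; norm_num [hF0, hF1] at h; omega
  induction t using Int.induction_on with
  | zero => norm_num [hF0, hFm1]
  | succ k ih =>
      have hrec : F ((k : ℤ) + 1) = F k + F ((k : ℤ) - 1) := by
        have h := hF ((k : ℤ) + 1)
        have e1 : (k : ℤ) + 1 - 1 = k := by ring
        have e2 : (k : ℤ) + 1 - 2 = (k : ℤ) - 1 := by ring
        rw [e1, e2] at h; exact h
      have e1 : (k : ℤ) + 1 - 1 = k := by ring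
      rw [zpow_add_one₀ hx, ih, e1, hrec]
      push_cast
      linear_combination (F (k : ℤ) : ℝ) * hsq
  | pred k ih =>
      have hrec : F (-(k : ℤ) - 2) = F (-(k : ℤ)) - F (-(k : ℤ) - 1) := by
        have h := hF (-(k : ℤ))
        linarith
      have e2 : -(k : ℤ) - 1 - 1 = -(k : ℤ) - 2 := by ring
      rw [zpow_sub_one₀ hx, ih, e2, hrec]
      field_simp
      push_cast
      linear_combination (-(F (-(k:ℤ) - 1) : ℝ)) * hsq

lemma LFrel (F : ℤ → ℤ) (hF0 : F 0 = 0) (hF1 : F 1 = 1)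
    (hF : ∀ j : ℤ, F j = F (j - 1) + F (j - 2)) (L : ℤ → ℤ) (hL0 : L 0 = 2) (hL1 : L 1 = 1)
    (hL : ∀ j : ℤ, L j = L (j - 1) + L (j - 2)) (t : ℤ) :
    L t = F t + 2 * F (t - 1) := by
  have hFm1 : F (-1) = 1 := by have h := hF 1; norm_num [hF0, hF1] at h; omega
  suffices H : ∀ u : ℤ, L u = F u + 2 * F (u - 1) ∧ L (u + 1) = F (u + 1) + 2 * F u by
    exact (H t).1
  intro u
  induction u using Int.induction_on with
  | zero => norm_num [hF0, hF1, hL0, hL1, hFm1]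
  | succ k ih =>
      obtain ⟨h1, h2⟩ := ih
      constructor
      · have e : (k : ℤ) + 1 - 1 = k := by ring
        rw [e]; exact h2
      · have hFr := hF ((k : ℤ) + 1 + 1)
        have hLr := hL ((k : ℤ) + 1 + 1)
        have e1 : (k : ℤ) + 1 + 1 - 1 = (k : ℤ) + 1 := by ring
        have e2 : (k : ℤ) + 1 + 1 - 2 = (k : ℤ) := by ring
        rw [e1, e2] at hFr hLr
        have hFr2 := hF ((k : ℤ) + 1)
        have e3 : (k : ℤ) + 1 - 1 = k := by ring
        have e4 : (k : ℤ) + 1 - 2 = (k : ℤ) - 1 := by ring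
        rw [e3, e4] at hFr2
        linarith
  | pred k ih =>
      obtain ⟨h1, h2⟩ := ih
      constructor
      · have hFr := hF (-(k : ℤ) + 1)
        have hLr := hL (-(k : ℤ) + 1)
        have e1 : -(k : ℤ) + 1 - 1 = -(k : ℤ) := by ring
        have e2 : -(k : ℤ) + 1 - 2 = -(k : ℤ) - 1 := by ring
        rw [e1, e2] at hFr hLr
        have hFr2 := hF (-(k : ℤ))
        have e3 : -(k : ℤ) - 1 - 1 = -(k : ℤ) - 2 := by ring
        rw [e3]
        linarith
      · have e : -(k : ℤ) - 1 + 1 = -(k : ℤ) := by ring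
        rw [e]; exact h1

lemma neg_one_zpow_two_mul (c : ℤ) : ((-1 : ℝ)) ^ (2 * c) = 1 := by
  rw [zpow_mul]; norm_num

lemma psi_zpow_even (c : ℤ) : psi ^ (2 * c) = phi ^ (-(2 * c)) := by
  have h : phi ^ (2 * c) * psi ^ (2 * c) = 1 := by
    rw [← mul_zpow, phi_mul_psi, neg_one_zpow_two_mul]
  rw [zpow_neg]
  exact eq_inv_of_mul_eq_one_left (by rw [mul_comm] at h; exact h)

lemma phi_zpow_even (c : ℤ) : phi ^ (2 * c) = psi ^ (-(2 * c)) := by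
  have h : psi ^ (2 * c) * phi ^ (2 * c) = 1 := by
    rw [← mul_zpow, mul_comm psi phi, phi_mul_psi, neg_one_zpow_two_mul]
  rw [zpow_neg]
  exact eq_inv_of_mul_eq_one_left (by rw [mul_comm] at h; exact h)

lemma evensum (x y : ℝ) (n : ℕ) :
    (x + y) ^ (2 * n) + (x - y) ^ (2 * n)
      = 2 * ∑ k ∈ Finset.range (n + 1),
          ((2 * n).choose (2 * k) : ℝ) * (y ^ (2 * k) * x ^ (2 * n - 2 * k)) := by
  have h1 : (x + y) ^ (2 * n)
      = ∑ i ∈ Finset.range (2 * n + 1), y ^ i * x ^ (2 * n - i) * ((2 * n).choose i : ℝ) := by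
    rw [show x + y = y + x by ring, add_pow]
  have h2 : (x - y) ^ (2 * n)
      = ∑ i ∈ Finset.range (2 * n + 1), (-y) ^ i * x ^ (2 * n - i) * ((2 * n).choose i : ℝ) := by
    rw [show x - y = -y + x by ring, add_pow]
  rw [h1, h2, ← Finset.sum_add_distrib]
  have key : ∀ i ∈ Finset.range (2 * n + 1),
      (y ^ i * x ^ (2 * n - i) * ((2 * n).choose i : ℝ)
        + (-y) ^ i * x ^ (2 * n - i) * ((2 * n).choose i : ℝ))
      = if Even i then 2 * (((2 * n).choose i : ℝ) * (y ^ i * x ^ (2 * n - i))) else 0 := by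
    intro i _
    rcases Nat.even_or_odd i with he | ho
    · rw [he.neg_pow, if_pos he]; ring
    · rw [ho.neg_pow, if_neg (Nat.not_even_iff_odd.mpr ho)]; ring
  rw [Finset.sum_congr rfl key, ← Finset.sum_filter, Finset.mul_sum]
  refine Finset.sum_nbij' (fun i => i / 2) (fun k => 2 * k) ?_ ?_ ?_ ?_ ?_
  · intro a ha
    simp only [Finset.mem_filter, Finset.mem_range] at ha ⊢
    omega
  · intro a ha
    simp only [Finset.mem_filter, Finset.mem_range] at ha ⊢
    constructor
    · omega
    · exact even_two_mul a
  · intro a ha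
    simp only [Finset.mem_filter, Finset.mem_range] at ha
    obtain ⟨_, he⟩ := ha
    obtain ⟨c, hc⟩ := he
    show 2 * (a / 2) = a
    omega
  · intro a _
    show 2 * a / 2 = a
    omega
  · intro a ha
    simp only [Finset.mem_filter, Finset.mem_range] at ha
    obtain ⟨_, he⟩ := ha
    obtain ⟨c, hc⟩ := he
    show 2 * (((2 * n).choose a : ℝ) * (y ^ a * x ^ (2 * n - a)))
        = 2 * (((2 * n).choose (2 * (a / 2)) : ℝ) * (y ^ (2 * (a / 2)) * x ^ (2 * n - 2 * (a / 2))))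
    have h2 : 2 * (a / 2) = a := by omega
    rw [h2]



theorem stmt4 (F : ℤ → ℤ) (hF0 : F 0 = 0) (hF1 : F 1 = 1)
    (hF : ∀ j : ℤ, F j = F (j - 1) + F (j - 2)) (L : ℤ → ℤ) (hL0 : L 0 = 2) (hL1 : L 1 = 1)
    (hL : ∀ j : ℤ, L j = L (j - 1) + L (j - 2)) (n : ℕ) (s j : ℤ) :
    2 * ∑ k ∈ Finset.range (n + 1), ((2 * n).choose (2 * k) : ℤ) * F (j * (4 * (k : ℤ) + s))
      = (L j ^ (2 * n) + 5 ^ n * F j ^ (2 * n)) * F (j * (2 * (n : ℤ) + s)) := by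
  have repφ := rep phi phi_ne phi_sq F hF0 hF1 hF
  have repψ := rep psi psi_ne psi_sq F hF0 hF1 hF
  have fibr : ∀ t : ℤ, (F t : ℝ) * Real.sqrt 5 = phi ^ t - psi ^ t := by
    intro t; rw [repφ t, repψ t]; linear_combination (-(F t : ℝ)) * phi_sub_psi
  have lucr : ∀ t : ℤ, (L t : ℝ) = phi ^ t + psi ^ t := by
    intro t
    rw [repφ t, repψ t, LFrel F hF0 hF1 hF L hL0 hL1 hL t]
    push_cast
    linear_combination (-(F t : ℝ)) * phi_add_psi
  have key : ((2 * ∑ k ∈ Finset.range (n + 1),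
        ((2 * n).choose (2 * k) : ℤ) * F (j * (4 * (k : ℤ) + s)) : ℤ) : ℝ)
      = (((L j ^ (2 * n) + 5 ^ n * F j ^ (2 * n)) * F (j * (2 * (n : ℤ) + s)) : ℤ) : ℝ) := by
    push_cast
    apply mul_left_cancel₀ (ne_of_gt sqrt5_pos)
    have h5n : (5 : ℝ) ^ n * (F j : ℝ) ^ (2 * n) = (phi ^ j - psi ^ j) ^ (2 * n) := by
      rw [← fibr j, mul_pow, pow_mul, pow_mul, sqrt5_sq]; ring
    rw [lucr j, h5n, evensum (phi ^ j) (psi ^ j) n]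
    -- LHS transform
    have lhs_eq : Real.sqrt 5 * (2 * ∑ k ∈ Finset.range (n + 1),
          ((2 * n).choose (2 * k) : ℝ) * (F (j * (4 * (k : ℤ) + s)) : ℝ))
        = 2 * ∑ k ∈ Finset.range (n + 1),
          ((2 * n).choose (2 * k) : ℝ) * (phi ^ (j * (4 * (k : ℤ) + s)) - psi ^ (j * (4 * (k : ℤ) + s))) := by
      rw [mul_left_comm, Finset.mul_sum]
      congr 1
      apply Finset.sum_congr rfl
      intro k _
      rw [← fibr]
      ring
    rw [lhs_eq]
    -- RHS transform
    have rhs_eq : Real.sqrt 5 * ((2 * ∑ k ∈ Finset.range (n + 1),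
          ((2 * n).choose (2 * k) : ℝ) * ((psi ^ j) ^ (2 * k) * (phi ^ j) ^ (2 * n - 2 * k)))
          * (F (j * (2 * (n : ℤ) + s)) : ℝ))
        = 2 * ((∑ k ∈ Finset.range (n + 1),
          ((2 * n).choose (2 * k) : ℝ) * ((psi ^ j) ^ (2 * k) * (phi ^ j) ^ (2 * n - 2 * k)))
          * (phi ^ (j * (2 * (n : ℤ) + s)) - psi ^ (j * (2 * (n : ℤ) + s)))) := by
      rw [← fibr (j * (2 * (n : ℤ) + s))]
      ring
    rw [rhs_eq]
    congr 1
    -- core sum identity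
    have claimB : ∑ k ∈ Finset.range (n + 1),
          ((2 * n).choose (2 * k) : ℝ) * psi ^ (j * (4 * (k : ℤ) + s))
        = ∑ k ∈ Finset.range (n + 1),
          ((2 * n).choose (2 * k) : ℝ) * ((psi ^ j) ^ (2 * k) * (phi ^ j) ^ (2 * n - 2 * k))
            * psi ^ (j * (2 * (n : ℤ) + s)) := by
      apply Finset.sum_congr rfl
      intro k hk
      have hkn : k ≤ n := by simpa [Nat.lt_succ_iff] using hk
      have c1 : (psi ^ j) ^ (2 * k) = psi ^ (2 * (j * (k : ℤ))) := by
        rw [← zpow_natCast (psi ^ j) (2 * k), ← zpow_mul]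
        congr 1; push_cast; ring
      have c2 : (phi ^ j) ^ (2 * n - 2 * k) = phi ^ (2 * (j * ((n : ℤ) - (k : ℤ)))) := by
        rw [← zpow_natCast (phi ^ j) (2 * n - 2 * k), ← zpow_mul]
        congr 1
        have : ((2 * n - 2 * k : ℕ) : ℤ) = 2 * (n : ℤ) - 2 * (k : ℤ) := by
          have h2 : 2 * k ≤ 2 * n := by omega
          push_cast [h2]
          ring
        rw [this]; ring
      rw [c1, c2, phi_zpow_even (j * ((n : ℤ) - (k : ℤ)))]
      have comb : psi ^ (2 * (j * (k : ℤ))) * psi ^ (-(2 * (j * ((n : ℤ) - (k : ℤ)))))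
          * psi ^ (j * (2 * (n : ℤ) + s)) = psi ^ (j * (4 * (k : ℤ) + s)) := by
        rw [← zpow_add₀ psi_ne, ← zpow_add₀ psi_ne]
        congr 1; ring
      rw [← comb]; ring
    have claimA : ∑ k ∈ Finset.range (n + 1),
          ((2 * n).choose (2 * k) : ℝ) * phi ^ (j * (4 * (k : ℤ) + s))
        = ∑ k ∈ Finset.range (n + 1),
          ((2 * n).choose (2 * k) : ℝ) * ((psi ^ j) ^ (2 * k) * (phi ^ j) ^ (2 * n - 2 * k))
            * phi ^ (j * (2 * (n : ℤ) + s)) := by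
      calc ∑ k ∈ Finset.range (n + 1),
            ((2 * n).choose (2 * k) : ℝ) * phi ^ (j * (4 * (k : ℤ) + s))
          = ∑ k ∈ Finset.range (n + 1),
            ((2 * n).choose (2 * (n + 1 - 1 - k)) : ℝ) * phi ^ (j * (4 * ((n + 1 - 1 - k : ℕ) : ℤ) + s)) :=
            (Finset.sum_range_reflect
              (fun k => ((2 * n).choose (2 * k) : ℝ) * phi ^ (j * (4 * ((k : ℕ) : ℤ) + s))) (n + 1)).symm
        _ = _ := by
            apply Finset.sum_congr rfl
            intro k hk
            have hkn : k ≤ n := by simpa [Nat.lt_succ_iff] using hk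
            have e0 : n + 1 - 1 - k = n - k := by omega
            rw [e0]
            have ech : (2 * n).choose (2 * (n - k)) = (2 * n).choose (2 * k) := by
              have e1 : 2 * (n - k) = 2 * n - 2 * k := by omega
              rw [e1, Nat.choose_symm (by omega)]
            rw [ech]
            have ecast : ((n - k : ℕ) : ℤ) = (n : ℤ) - (k : ℤ) := by
              push_cast [hkn]; ring
            rw [ecast]
            have c1 : (psi ^ j) ^ (2 * k) = phi ^ (-(2 * (j * (k : ℤ)))) := by
              rw [← zpow_natCast (psi ^ j) (2 * k), ← zpow_mul,
                show j * ((2 * k : ℕ) : ℤ) = 2 * (j * (k : ℤ)) by push_cast; ring,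
                psi_zpow_even]
            have c2 : (phi ^ j) ^ (2 * n - 2 * k) = phi ^ (2 * (n : ℤ) * j - 2 * (k : ℤ) * j) := by
              rw [← zpow_natCast (phi ^ j) (2 * n - 2 * k), ← zpow_mul]
              congr 1
              have : ((2 * n - 2 * k : ℕ) : ℤ) = 2 * (n : ℤ) - 2 * (k : ℤ) := by
                have h2 : 2 * k ≤ 2 * n := by omega
                push_cast [h2]
                ring
              rw [this]; ring
            rw [c1, c2]
            have comb : phi ^ (-(2 * (j * (k : ℤ)))) * phi ^ (2 * (n : ℤ) * j - 2 * (k : ℤ) * j)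
                * phi ^ (j * (2 * (n : ℤ) + s)) = phi ^ (j * (4 * ((n : ℤ) - (k : ℤ)) + s)) := by
              rw [← zpow_add₀ phi_ne, ← zpow_add₀ phi_ne]
              congr 1; ring
            rw [← comb]; ring
    calc ∑ k ∈ Finset.range (n + 1),
          ((2 * n).choose (2 * k) : ℝ) * (phi ^ (j * (4 * (k : ℤ) + s)) - psi ^ (j * (4 * (k : ℤ) + s)))
        = (∑ k ∈ Finset.range (n + 1),
            ((2 * n).choose (2 * k) : ℝ) * phi ^ (j * (4 * (k : ℤ) + s)))
          - ∑ k ∈ Finset.range (n + 1),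
            ((2 * n).choose (2 * k) : ℝ) * psi ^ (j * (4 * (k : ℤ) + s)) := by
          rw [← Finset.sum_sub_distrib]
          apply Finset.sum_congr rfl
          intro k _
          ring
      _ = _ := by
          rw [claimA, claimB, ← Finset.sum_mul, ← Finset.sum_mul]
          ring
  exact_mod_cast key
end

section
/- For every positive integer n and all integers s and j, 2 * ∑_{k=0}^{n-1} C(2n-1, 2k) * F(j(4k+s)) = (-1)^j * (L(j)^(2n-1) * F(j(2n+s-1)) - 5^(n-1) * F(j)^(2n-1) * L(j(2n+s-1))). -/
open Finset

lemma pair_sum' (f : ℕ → ℝ) : ∀ n : ℕ, ∑ i ∈ range (2*n), f i = ∑ k ∈ range n, (f (2*k) + f (2*k+1))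
  | 0 => by simp
  | (n+1) => by
      rw [show 2*(n+1) = 2*n+1+1 from by ring, Finset.sum_range_succ, Finset.sum_range_succ,
        pair_sum' f n, Finset.sum_range_succ]
      ring

lemma even_sum' (n : ℕ) (hn : 0 < n) (x : ℝ) :
    2 * ∑ k ∈ range n, (((2*n-1).choose (2*k) : ℕ) : ℝ) * x^(2*k)
      = (1+x)^(2*n-1) + (1-x)^(2*n-1) := by
  have hm : 2*n-1+1 = 2*n := by omega
  have h1 : (1+x)^(2*n-1) = ∑ i ∈ range (2*n), x^i * (((2*n-1).choose i : ℕ) : ℝ) := by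
    rw [add_comm, add_pow, hm]
    simp
  have h2 : (1-x)^(2*n-1) = ∑ i ∈ range (2*n), (-x)^i * (((2*n-1).choose i : ℕ) : ℝ) := by
    rw [show (1:ℝ)-x = -x+1 from by ring, add_pow, hm]
    simp
  rw [h1, h2, ← Finset.sum_add_distrib, pair_sum', Finset.mul_sum]
  refine Finset.sum_congr rfl fun k _ => ?_
  rw [Even.neg_pow ⟨k, by ring⟩, Odd.neg_pow ⟨k, by ring⟩]
  ring

lemma core' (m : ℕ) (hm : Odd m) (a b u v e : ℝ) (he : e = 1 ∨ e = -1) (hab : a * b = e) :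
    u * ((1+a^2)^m + (1-a^2)^m) - v * ((1+b^2)^m + (1-b^2)^m)
      = e * ((a+b)^m * (a^m*u - b^m*v) - (a-b)^m * (a^m*u + b^m*v)) := by
  rcases he with rfl | rfl
  · rw [show 1+a^2 = a*(a+b) from by linear_combination -hab,
        show 1-a^2 = -(a*(a-b)) from by linear_combination -hab,
        show 1+b^2 = b*(a+b) from by linear_combination -hab,
        show 1-b^2 = b*(a-b) from by linear_combination -hab,
        hm.neg_pow, mul_pow, mul_pow, mul_pow, mul_pow]
    ring
  · rw [show 1+a^2 = a*(a-b) from by linear_combination hab,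
        show 1-a^2 = -(a*(a+b)) from by linear_combination hab,
        show 1+b^2 = -(b*(a-b)) from by linear_combination hab,
        show 1-b^2 = -(b*(a+b)) from by linear_combination hab,
        hm.neg_pow, hm.neg_pow, hm.neg_pow, mul_pow, mul_pow, mul_pow, mul_pow]
    ring

lemma gen' (a b : ℝ) (ha : a ≠ 0) (hb : b ≠ 0) (ha2 : a^2 = a + 1) (hb2 : b^2 = b + 1)
    (G : ℤ → ℤ) (hG : ∀ j : ℤ, G j = G (j-1) + G (j-2)) (c d : ℝ)
    (h0 : (G 0 : ℝ) = c + d) (h1 : (G 1 : ℝ) = c*a + d*b) :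
    ∀ j : ℤ, (G j : ℝ) = c * a^j + d * b^j := by
  have key : ∀ (x:ℝ), x ≠ 0 → x^2 = x+1 → ∀ i:ℤ, x^(i+1) = x^i + x^(i-1) := by
    intro x hx h2 i
    have e1 : x^(i+1) = x^(i-1) * x^2 := by
      rw [← zpow_natCast x 2, ← zpow_add₀ hx]
      congr 1
      ring
    have e2 : x^i = x^(i-1) * x := by
      rw [← zpow_add_one₀ hx]
      congr 1
      ring
    rw [e1, h2, e2]
    ring
  have ka := key a ha ha2
  have kb := key b hb hb2
  suffices H : ∀ j:ℤ, (G j:ℝ) = c*a^j + d*b^j ∧ (G (j+1):ℝ) = c*a^(j+1) + d*b^(j+1) by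
    exact fun j => (H j).1
  intro j
  induction j using Int.induction_on with
  | zero => exact ⟨by simpa using h0, by simpa using h1⟩
  | succ i ih =>
      refine ⟨ih.2, ?_⟩
      have hr : ((G ((i:ℤ)+1+1)) : ℝ) = (G ((i:ℤ)+1) : ℝ) + (G (i:ℤ) : ℝ) := by
        have h := hG ((i:ℤ)+1+1)
        rw [show ((i:ℤ)+1+1)-1 = (i:ℤ)+1 from by ring, show ((i:ℤ)+1+1)-2 = (i:ℤ) from by ring] at h
        exact_mod_cast h
      have ka' := ka ((i:ℤ)+1)
      have kb' := kb ((i:ℤ)+1)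
      rw [show (i:ℤ)+1-1 = (i:ℤ) from by ring] at ka' kb'
      linear_combination hr + ih.1 + ih.2 - c*ka' - d*kb'
  | pred i ih =>
      constructor
      · have hr : ((G (-(i:ℤ)+1)) : ℝ) = (G (-(i:ℤ)) : ℝ) + (G (-(i:ℤ)-1) : ℝ) := by
          have h := hG (-(i:ℤ)+1)
          rw [show (-(i:ℤ)+1)-1 = -(i:ℤ) from by ring, show (-(i:ℤ)+1)-2 = -(i:ℤ)-1 from by ring] at h
          exact_mod_cast h
        have ka' := ka (-(i:ℤ))
        have kb' := kb (-(i:ℤ))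
        rw [show -(i:ℤ)-1 = -((i:ℤ)+1) from by ring]
        rw [show -(i:ℤ)-1 = -((i:ℤ)+1) from by ring] at hr ka' kb'
        linear_combination -hr + ih.2 - ih.1 + c*ka' + d*kb'
      · rw [show -((i:ℤ))-1+1 = -(i:ℤ) from by ring]
        exact ih.1

theorem stmt6 (F : ℤ → ℤ) (hF0 : F 0 = 0) (hF1 : F 1 = 1)
    (hF : ∀ j : ℤ, F j = F (j - 1) + F (j - 2)) (L : ℤ → ℤ) (hL0 : L 0 = 2) (hL1 : L 1 = 1)
    (hL : ∀ j : ℤ, L j = L (j - 1) + L (j - 2)) (n : ℕ) (hn : 0 < n) (s j : ℤ) :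
    2 * ∑ k ∈ Finset.range n, ((2 * n - 1).choose (2 * k) : ℤ) * F (j * (4 * (k : ℤ) + s))
      = (-1 : ℤ) ^ j.natAbs *
        (L j ^ (2 * n - 1) * F (j * (2 * (n : ℤ) + s - 1))
          - 5 ^ (n - 1) * F j ^ (2 * n - 1) * L (j * (2 * (n : ℤ) + s - 1))) := by
  have h5 : (0:ℝ) ≤ 5 := by norm_num
  have hs5sq : Real.sqrt 5 ^ 2 = 5 := Real.sq_sqrt h5
  have hs5pos : 0 < Real.sqrt 5 := Real.sqrt_pos.mpr (by norm_num)
  have hs5ne : Real.sqrt 5 ≠ 0 := ne_of_gt hs5pos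
  obtain ⟨a, b, ha, hb, hab, hFr, hLr⟩ :
      ∃ a b : ℝ, a ≠ 0 ∧ b ≠ 0 ∧ a * b = -1 ∧
        (∀ X : ℤ, (F X : ℝ) * Real.sqrt 5 = a^X - b^X) ∧
        (∀ X : ℤ, (L X : ℝ) = a^X + b^X) := by
    refine ⟨(1+Real.sqrt 5)/2, (1-Real.sqrt 5)/2, ?_, ?_, ?_, ?_, ?_⟩
    · have : (0:ℝ) < (1+Real.sqrt 5)/2 := by positivity
      exact ne_of_gt this
    · intro h
      have h15 : Real.sqrt 5 = 1 := by linarith [div_eq_zero_iff.mp h]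
      rw [h15] at hs5sq; norm_num at hs5sq
    · linear_combination (-1/4 : ℝ) * hs5sq
    · have ha2 : ((1+Real.sqrt 5)/2)^2 = (1+Real.sqrt 5)/2 + 1 := by
        linear_combination (1/4 : ℝ) * hs5sq
      have hb2 : ((1-Real.sqrt 5)/2)^2 = (1-Real.sqrt 5)/2 + 1 := by
        linear_combination (1/4 : ℝ) * hs5sq
      have hane : ((1+Real.sqrt 5)/2 : ℝ) ≠ 0 := by
        have : (0:ℝ) < (1+Real.sqrt 5)/2 := by positivity
        exact ne_of_gt this
      have hbne : ((1-Real.sqrt 5)/2 : ℝ) ≠ 0 := by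
        intro h
        have h15 : Real.sqrt 5 = 1 := by linarith [div_eq_zero_iff.mp h]
        rw [h15] at hs5sq; norm_num at hs5sq
      have hg := gen' _ _ hane hbne ha2 hb2 F hF (1/Real.sqrt 5) (-(1/Real.sqrt 5))
        (by rw [hF0]; push_cast; ring)
        (by rw [hF1]; push_cast; field_simp; ring)
      intro X
      rw [hg X]
      field_simp
      ring
    · have ha2 : ((1+Real.sqrt 5)/2)^2 = (1+Real.sqrt 5)/2 + 1 := by
        linear_combination (1/4 : ℝ) * hs5sq
      have hb2 : ((1-Real.sqrt 5)/2)^2 = (1-Real.sqrt 5)/2 + 1 := by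
        linear_combination (1/4 : ℝ) * hs5sq
      have hane : ((1+Real.sqrt 5)/2 : ℝ) ≠ 0 := by
        have : (0:ℝ) < (1+Real.sqrt 5)/2 := by positivity
        exact ne_of_gt this
      have hbne : ((1-Real.sqrt 5)/2 : ℝ) ≠ 0 := by
        intro h
        have h15 : Real.sqrt 5 = 1 := by linarith [div_eq_zero_iff.mp h]
        rw [h15] at hs5sq; norm_num at hs5sq
      have hg := gen' _ _ hane hbne ha2 hb2 L hL 1 1
        (by rw [hL0]; push_cast; ring)
        (by rw [hL1]; push_cast; ring)
      intro X
      rw [hg X]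
      ring
  -- abbreviations
  have haj : a^j ≠ 0 := zpow_ne_zero _ ha
  have hbj : b^j ≠ 0 := zpow_ne_zero _ hb
  have hmodd : Odd (2*n-1) := ⟨n-1, by omega⟩
  have h5m : Real.sqrt 5 ^ (2*n-1) = 5^(n-1) * Real.sqrt 5 := by
    rw [show 2*n-1 = 2*(n-1)+1 from by omega, pow_succ, pow_mul, hs5sq]
  have hABe : a^j * b^j = (-1:ℝ)^(j.natAbs) := by
    rw [← mul_zpow, hab]
    rcases Int.natAbs_eq j with h | h
    · conv_lhs => rw [h]
      rw [zpow_natCast]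
    · conv_lhs => rw [h]
      rw [zpow_neg, zpow_natCast, ← inv_pow, inv_neg, inv_one]
  have he : ((-1:ℝ)^(j.natAbs) = 1) ∨ ((-1:ℝ)^(j.natAbs) = -1) := by
    rcases Nat.even_or_odd j.natAbs with h | h
    · exact Or.inl h.neg_one_pow
    · exact Or.inr h.neg_one_pow
  have hsplit : ∀ (x:ℝ), x ≠ 0 → ∀ k:ℕ, x^(j*(4*(k:ℤ)+s)) = ((x^j)^2)^(2*k) * (x^j)^s := by
    intro x hx k
    have hxj : x^j ≠ 0 := zpow_ne_zero _ hx
    rw [zpow_mul, zpow_add₀ hxj]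
    congr 1
    rw [show (4*(k:ℤ)) = ((4*k : ℕ):ℤ) from by push_cast; ring, zpow_natCast,
      show 4*k = 2*(2*k) from by ring, pow_mul]
  have hbig : ∀ (x:ℝ), x ≠ 0 → x^(j*(2*(n:ℤ)+s-1)) = (x^j)^(2*n-1) * (x^j)^s := by
    intro x hx
    have hxj : x^j ≠ 0 := zpow_ne_zero _ hx
    rw [zpow_mul, show 2*(n:ℤ)+s-1 = ((2*n-1:ℕ):ℤ) + s from by push_cast; omega,
      zpow_add₀ hxj, zpow_natCast]
  apply @Int.cast_injective ℝ _
  push_cast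
  refine mul_right_cancel₀ hs5ne ?_
  calc (2 * ∑ k ∈ Finset.range n, ((2*n-1).choose (2*k) : ℝ) * (F (j*(4*(k:ℤ)+s)) : ℝ)) * Real.sqrt 5
      = 2 * ∑ k ∈ Finset.range n, ((2*n-1).choose (2*k) : ℝ) * ((F (j*(4*(k:ℤ)+s)) : ℝ) * Real.sqrt 5) := by
        rw [mul_assoc, Finset.sum_mul]
        congr 1
        refine Finset.sum_congr rfl fun k _ => by ring
    _ = 2 * ∑ k ∈ Finset.range n, ((2*n-1).choose (2*k) : ℝ) *
          (((a^j)^2)^(2*k) * (a^j)^s - ((b^j)^2)^(2*k) * (b^j)^s) := by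
        congr 1
        refine Finset.sum_congr rfl fun k _ => by
          rw [hFr, hsplit a ha k, hsplit b hb k]
    _ = (a^j)^s * (2 * ∑ k ∈ Finset.range n, ((2*n-1).choose (2*k) : ℝ) * ((a^j)^2)^(2*k))
        - (b^j)^s * (2 * ∑ k ∈ Finset.range n, ((2*n-1).choose (2*k) : ℝ) * ((b^j)^2)^(2*k)) := by
        simp only [Finset.mul_sum, ← Finset.sum_sub_distrib]
        refine Finset.sum_congr rfl fun k _ => by ring
    _ = (a^j)^s * ((1+(a^j)^2)^(2*n-1) + (1-(a^j)^2)^(2*n-1))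
        - (b^j)^s * ((1+(b^j)^2)^(2*n-1) + (1-(b^j)^2)^(2*n-1)) := by
        rw [even_sum' n hn ((a^j)^2), even_sum' n hn ((b^j)^2)]
    _ = (-1:ℝ)^(j.natAbs) * ((a^j+b^j)^(2*n-1) * ((a^j)^(2*n-1)*(a^j)^s - (b^j)^(2*n-1)*(b^j)^s)
          - (a^j-b^j)^(2*n-1) * ((a^j)^(2*n-1)*(a^j)^s + (b^j)^(2*n-1)*(b^j)^s)) :=
        core' (2*n-1) hmodd (a^j) (b^j) ((a^j)^s) ((b^j)^s) ((-1:ℝ)^(j.natAbs)) he hABe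
    _ = ((-1:ℝ)^(j.natAbs) * ((L j : ℝ)^(2*n-1) * (F (j*(2*(n:ℤ)+s-1)) : ℝ)
          - 5^(n-1) * (F j : ℝ)^(2*n-1) * (L (j*(2*(n:ℤ)+s-1)) : ℝ))) * Real.sqrt 5 := by
        have hLj : (L j : ℝ) = a^j + b^j := hLr j
        have hLbig : (L (j*(2*(n:ℤ)+s-1)) : ℝ) = (a^j)^(2*n-1)*(a^j)^s + (b^j)^(2*n-1)*(b^j)^s := by
          rw [hLr, hbig a ha, hbig b hb]
        have hFbig : (F (j*(2*(n:ℤ)+s-1)) : ℝ) * Real.sqrt 5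
            = (a^j)^(2*n-1)*(a^j)^s - (b^j)^(2*n-1)*(b^j)^s := by
          rw [hFr, hbig a ha, hbig b hb]
        have hFjm : (5:ℝ)^(n-1) * (F j : ℝ)^(2*n-1) * Real.sqrt 5 = (a^j - b^j)^(2*n-1) := by
          have h := congrArg (fun t : ℝ => t^(2*n-1)) (hFr j)
          simp only [mul_pow] at h
          rw [h5m] at h
          linear_combination h
        rw [hLj, hLbig]
        linear_combination (-((-1:ℝ)^(j.natAbs)*(a^j+b^j)^(2*n-1)))*hFbig
          + ((-1:ℝ)^(j.natAbs)*((a^j)^(2*n-1)*(a^j)^s + (b^j)^(2*n-1)*(b^j)^s))*hFjm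
end

section
/- For every positive integer n and all integers s and j, 2 * ∑_{k=0}^{n-1} C(2n-1, 2k) * L(j(4k+s)) = (-1)^j * (L(j)^(2n-1) * L(j(2n+s-1)) - 5^n * F(j)^(2n-1) * F(j(2n+s-1))). -/
lemma int_pair_induction (P : ℤ → Prop) (h0 : P 0) (h1 : P 1)
    (hup : ∀ a : ℤ, P a → P (a + 1) → P (a + 2))
    (hdown : ∀ a : ℤ, P a → P (a + 1) → P (a - 1)) : ∀ a, P a := by
  have key : ∀ a : ℤ, P a ∧ P (a + 1) := by
    intro a
    induction a using Int.induction_on with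
    | zero => exact ⟨h0, h1⟩
    | succ k ih =>
        refine ⟨ih.2, ?_⟩
        have := hup k ih.1 ih.2
        have e : (k : ℤ) + 2 = (k : ℤ) + 1 + 1 := by ring
        rwa [e] at this
    | pred k ih =>
        constructor
        · exact hdown (-(k:ℤ)) ih.1 ih.2
        · have e : -(k:ℤ) - 1 + 1 = -(k:ℤ) := by ring
          rw [e]; exact ih.1
  exact fun a => (key a).1

section FL
variable (F L : ℤ → ℤ) (hF0 : F 0 = 0) (hF1 : F 1 = 1)
    (hF : ∀ j : ℤ, F j = F (j - 1) + F (j - 2)) (hL0 : L 0 = 2) (hL1 : L 1 = 1)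
    (hL : ∀ j : ℤ, L j = L (j - 1) + L (j - 2))

include hF in
lemma recF : ∀ a : ℤ, F (a + 2) = F (a + 1) + F a := by
  intro a
  have := hF (a + 2)
  have e1 : a + 2 - 1 = a + 1 := by ring
  have e2 : a + 2 - 2 = a := by ring
  rwa [e1, e2] at this

include hL in
lemma recL : ∀ a : ℤ, L (a + 2) = L (a + 1) + L a := by
  intro a
  have := hL (a + 2)
  have e1 : a + 2 - 1 = a + 1 := by ring
  have e2 : a + 2 - 2 = a := by ring
  rwa [e1, e2] at this

include hF0 hF1 hF hL0 hL1 hL in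
lemma shift1 : ∀ a : ℤ, 2 * L (a + 1) = L a + 5 * F a ∧ 2 * F (a + 1) = F a + L a := by
  have rF := recF F hF
  have rL := recL L hL
  apply int_pair_induction
  · have f1 : F 1 = F 0 + F (-1) := by have := hF 1; norm_num at this; convert this using 2 <;> ring
    have l1 : L 1 = L 0 + L (-1) := by have := hL 1; norm_num at this; convert this using 2 <;> ring
    norm_num [hF0, hF1, hL0, hL1]
  · have h2F : F 2 = F 1 + F 0 := by have := rF 0; norm_num at this; exact this
    have h2L : L 2 = L 1 + L 0 := by have := rL 0; norm_num at this; exact this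
    constructor
    · rw [show (1:ℤ)+1 = 0+2 by ring, rL 0]; norm_num [hF1, hL1, hL0]
    · rw [show (1:ℤ)+1 = 0+2 by ring, rF 0]; norm_num [hF1, hF0, hL1]
  · rintro a ⟨la, fa⟩ ⟨la1, fa1⟩
    constructor
    · rw [show a+2+1 = a+1+2 by ring, rL (a+1), rL a, rF a]
      linarith
    · rw [show a+2+1 = a+1+2 by ring, rF (a+1), rF a, rL a]
      linarith
  · rintro a ⟨la, fa⟩ ⟨la1, fa1⟩
    have hrl : L (a+1+1) = L (a+1) + L a := by
      have := rL a; rwa [show a+2 = a+1+1 by ring] at this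
    have hrf : F (a+1+1) = F (a+1) + F a := by
      have := rF a; rwa [show a+2 = a+1+1 by ring] at this
    have eL : L (a+1) = L a + L (a-1) := by
      have := rL (a-1); rwa [show a-1+2 = a+1 by ring, show a-1+1 = a by ring] at this
    have eF : F (a+1) = F a + F (a-1) := by
      have := rF (a-1); rwa [show a-1+2 = a+1 by ring, show a-1+1 = a by ring] at this
    rw [show a-1+1 = a by ring]
    constructor
    · linarith
    · linarith
end FL

section FL2
variable (F L : ℤ → ℤ) (hF0 : F 0 = 0) (hF1 : F 1 = 1)
    (hF : ∀ j : ℤ, F j = F (j - 1) + F (j - 2)) (hL0 : L 0 = 2) (hL1 : L 1 = 1)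
    (hL : ∀ j : ℤ, L j = L (j - 1) + L (j - 2))

include hF0 hF1 hF hL0 hL1 hL in
lemma addFL : ∀ a b : ℤ, 2 * L (a + b) = L a * L b + 5 * F a * F b ∧
    2 * F (a + b) = F a * L b + L a * F b := by
  have rF := recF F hF
  have rL := recL L hL
  have sh := shift1 F L hF0 hF1 hF hL0 hL1 hL
  intro a
  apply int_pair_induction
  · constructor
    · rw [add_zero, hL0, hF0]; ring
    · rw [add_zero, hL0, hF0]; ring
  · have h1 := (sh a).1
    have h2 := (sh a).2
    constructor
    · rw [hL1, hF1]; linarith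
    · rw [hL1, hF1]; linarith
  · rintro b ⟨l0, f0⟩ ⟨l1, f1⟩
    rw [show a+(b+1) = a+b+1 by ring] at l1 f1
    rw [show a+(b+2) = a+b+2 by ring, rL (a+b), rF (a+b), rL b, rF b]
    constructor
    · linear_combination l0 + l1
    · linear_combination f0 + f1
  · rintro b ⟨l0, f0⟩ ⟨l1, f1⟩
    rw [show a+(b+1) = a+b+1 by ring] at l1 f1
    have hLb : L (b+1) = L b + L (b-1) := by
      have := rL (b-1); rwa [show b-1+2 = b+1 by ring, show b-1+1 = b by ring] at this
    have hFb : F (b+1) = F b + F (b-1) := by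
      have := rF (b-1); rwa [show b-1+2 = b+1 by ring, show b-1+1 = b by ring] at this
    have hLab : L (a+b+1) = L (a+b) + L (a+b-1) := by
      have := rL (a+b-1); rwa [show a+b-1+2 = a+b+1 by ring, show a+b-1+1 = a+b by ring] at this
    have hFab : F (a+b+1) = F (a+b) + F (a+b-1) := by
      have := rF (a+b-1); rwa [show a+b-1+2 = a+b+1 by ring, show a+b-1+1 = a+b by ring] at this
    rw [show a+(b-1) = a+b-1 by ring]
    constructor
    · linear_combination l1 - l0 - 2*hLab + L a * hLb + 5 * F a * hFb
    · linear_combination f1 - f0 - 2*hFab + F a * hLb + L a * hFb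
end FL2

lemma epow_succ (a : ℤ) : ((-1:ℤ)) ^ (a+1).natAbs = -((-1:ℤ)) ^ a.natAbs := by
  rcases Int.even_or_odd a with h | h
  · rw [(Int.natAbs_even.mpr h).neg_one_pow, (Int.natAbs_odd.mpr (by exact h.add_one)).neg_one_pow]
  · rw [(Int.natAbs_odd.mpr h).neg_one_pow, (Int.natAbs_even.mpr (by simpa using h.add_one)).neg_one_pow]
    norm_num

lemma epow_sq (a : ℤ) : ((-1:ℤ)) ^ a.natAbs * ((-1:ℤ)) ^ a.natAbs = 1 := by
  rcases Int.even_or_odd a with h | h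
  · rw [(Int.natAbs_even.mpr h).neg_one_pow]; ring
  · rw [(Int.natAbs_odd.mpr h).neg_one_pow]; ring

section FL3
variable (F L : ℤ → ℤ) (hF0 : F 0 = 0) (hF1 : F 1 = 1)
    (hF : ∀ j : ℤ, F j = F (j - 1) + F (j - 2)) (hL0 : L 0 = 2) (hL1 : L 1 = 1)
    (hL : ∀ j : ℤ, L j = L (j - 1) + L (j - 2))

include hF0 hF1 hF hL0 hL1 hL in
lemma negFL : ∀ a : ℤ, F (-a) = -((-1:ℤ)) ^ a.natAbs * F a ∧ L (-a) = ((-1:ℤ)) ^ a.natAbs * L a := by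
  have rF := recF F hF
  have rL := recL L hL
  apply int_pair_induction
  · simp [hF0]
  · have f1 : F 1 = F 0 + F (-1) := by
      have := hF 1; rwa [show (1:ℤ)-1 = 0 by ring, show (1:ℤ)-2 = -1 by ring] at this
    have l1 : L 1 = L 0 + L (-1) := by
      have := hL 1; rwa [show (1:ℤ)-1 = 0 by ring, show (1:ℤ)-2 = -1 by ring] at this
    norm_num [hF0, hF1, hL0, hL1] at f1 l1 ⊢
    constructor
    · linarith
    · linarith
  · rintro a ⟨fa, la⟩ ⟨fa1, la1⟩
    have hf : F (-a) = F (-a-1) + F (-a-2) := hF (-a)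
    have hl : L (-a) = L (-a-1) + L (-a-2) := hL (-a)
    rw [show -(a+1) = -a-1 by ring, epow_succ a] at fa1 la1
    have hF2 : F (a+1+1) = F (a+1) + F a := by
      have := rF a; rwa [show a+2 = a+1+1 by ring] at this
    have hL2 : L (a+1+1) = L (a+1) + L a := by
      have := rL a; rwa [show a+2 = a+1+1 by ring] at this
    rw [show -(a+2) = -a-2 by ring, show (a:ℤ)+2 = a+1+1 by ring, epow_succ (a+1), epow_succ a]
    constructor
    · linear_combination -hf + fa - fa1 + ((-1:ℤ)) ^ a.natAbs * hF2
    · linear_combination -hl + la - la1 - ((-1:ℤ)) ^ a.natAbs * hL2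
  · rintro a ⟨fa, la⟩ ⟨fa1, la1⟩
    have hf : F (-a+1) = F (-a) + F (-a-1) := by
      have := hF (-a+1); rwa [show -a+1-1 = -a by ring, show -a+1-2 = -a-1 by ring] at this
    have hl : L (-a+1) = L (-a) + L (-a-1) := by
      have := hL (-a+1); rwa [show -a+1-1 = -a by ring, show -a+1-2 = -a-1 by ring] at this
    have hFa1 : F (a+1) = F a + F (a-1) := by
      have := hF (a+1); rwa [show a+1-1 = a by ring, show a+1-2 = a-1 by ring] at this
    have hLa1 : L (a+1) = L a + L (a-1) := by
      have := hL (a+1); rwa [show a+1-1 = a by ring, show a+1-2 = a-1 by ring] at this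
    have ee : ((-1:ℤ)) ^ (a-1).natAbs = -((-1:ℤ)) ^ a.natAbs := by
      have := epow_succ (a-1); rw [show a-1+1 = a by ring] at this; linarith
    rw [show -(a+1) = -a-1 by ring, epow_succ a] at fa1 la1
    rw [show -(a-1) = -a+1 by ring, ee]
    constructor
    · linear_combination hf + fa + fa1 + ((-1:ℤ)) ^ a.natAbs * hFa1
    · linear_combination hl + la + la1 - ((-1:ℤ)) ^ a.natAbs * hLa1
end FL3

section FL4
variable (F L : ℤ → ℤ) (hF0 : F 0 = 0) (hF1 : F 1 = 1)
    (hF : ∀ j : ℤ, F j = F (j - 1) + F (j - 2)) (hL0 : L 0 = 2) (hL1 : L 1 = 1)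
    (hL : ∀ j : ℤ, L j = L (j - 1) + L (j - 2))

include hF0 hF1 hF hL0 hL1 hL in
lemma parFL : ∀ a : ℤ, L a ^ 2 - 5 * F a ^ 2 = 4 * ((-1:ℤ)) ^ a.natAbs := by
  intro a
  have h := (addFL F L hF0 hF1 hF hL0 hL1 hL a (-a)).1
  rw [add_neg_cancel, hL0] at h
  have hneg := negFL F L hF0 hF1 hF hL0 hL1 hL a
  rw [hneg.1, hneg.2] at h
  have hsq := epow_sq a
  rcases Int.even_or_odd a with he | he
  · rw [(Int.natAbs_even.mpr he).neg_one_pow] at h ⊢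
    linear_combination -h
  · rw [(Int.natAbs_odd.mpr he).neg_one_pow] at h ⊢
    linear_combination h
end FL4

lemma powA {R : Type*} [CommRing R] (A : ℤ → R)
    (hm : ∀ a b : ℤ, A a * A b = 2 * A (a + b)) (b : ℤ) :
    ∀ m : ℕ, A b ^ (m + 1) = 2 ^ m * A (b * (m + 1)) := by
  intro m
  induction m with
  | zero => simp
  | succ m ih =>
      rw [pow_succ, ih, mul_assoc, hm, show (b*((m:ℕ)+1) + b : ℤ) = b * ((m+1:ℕ)+1) by push_cast; ring,
        ← mul_assoc, ← pow_succ]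

lemma pairSum {M : Type*} [AddCommMonoid M] (g : ℕ → M) :
    ∀ n : ℕ, ∑ i ∈ Finset.range (2 * n), g i = ∑ k ∈ Finset.range n, (g (2 * k) + g (2 * k + 1)) := by
  intro n
  induction n with
  | zero => simp
  | succ n ih =>
      rw [show 2*(n+1) = 2*n+1+1 by ring, Finset.sum_range_succ, Finset.sum_range_succ, ih,
        Finset.sum_range_succ, add_assoc]

lemma ringMain {R : Type*} [CommRing R] (A : ℤ → R)
    (hm : ∀ a b : ℤ, A a * A b = 2 * A (a + b)) (s : ℤ) (n N : ℕ) (hN : N + 1 = 2 * n) :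
    A s * ((2 + A 2) ^ N + (2 - A 2) ^ N)
      = 2 ^ (2 * n) * ∑ k ∈ Finset.range n, (N.choose (2 * k) : R) * A (4 * k + s) := by
  have h1 : (2 + A 2) ^ N = ∑ i ∈ Finset.range (N + 1), A 2 ^ i * 2 ^ (N - i) * (N.choose i : R) := by
    rw [add_comm]; exact add_pow _ _ _
  have h2 : (2 - A 2) ^ N = ∑ i ∈ Finset.range (N + 1), (-1) ^ i * A 2 ^ i * 2 ^ (N - i) * (N.choose i : R) := by
    rw [show (2 - A 2 : R) = -(A 2) + 2 by ring, add_pow]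
    refine Finset.sum_congr rfl fun i _ => ?_
    rw [neg_pow]
  have hKey : ∀ k : ℕ, A s * (2 * A 2 ^ (2 * k)) = 2 ^ (2 * k + 1) * A (4 * k + s) := by
    intro k
    cases k with
    | zero => simp [mul_comm]
    | succ k =>
        rw [show 2 * (k + 1) = (2 * k + 1) + 1 by ring, powA A hm 2 (2 * k + 1)]
        rw [show ((2:ℤ) * ((2*k+1:ℕ)+1)) = (4 * (k+1:ℕ) : ℤ) by push_cast; ring]
        calc A s * (2 * (2 ^ (2*k+1) * A (4 * (k+1:ℕ))))
            = 2 ^ (2*k+2) * (A s * A (4 * (k+1:ℕ))) := by ring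
          _ = 2 ^ (2*k+2) * (2 * A (s + 4 * (k+1:ℕ))) := by rw [hm]
          _ = 2 ^ (2*(k+1)+1) * A (4 * (k+1:ℕ) + s) := by rw [add_comm (s:ℤ)]; ring
  rw [h1, h2, ← Finset.sum_add_distrib, hN, pairSum]
  rw [Finset.mul_sum, Finset.mul_sum]
  refine Finset.sum_congr rfl fun k hk => ?_
  have hodd : ((-1 : R)) ^ (2 * k + 1) = -1 := Odd.neg_one_pow ⟨k, by ring⟩
  have heven : ((-1 : R)) ^ (2 * k) = 1 := Even.neg_one_pow ⟨k, by ring⟩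
  rw [hodd, heven]
  have hk' : k < n := Finset.mem_range.mp hk
  have hexp : (N - 2 * k) + (2 * k + 1) = 2 * n := by omega
  have hpow : (2:R) ^ (N - 2*k) * 2 ^ (2*k+1) = 2 ^ (2*n) := by rw [← pow_add, hexp]
  linear_combination (2:R)^(N - 2*k) * (N.choose (2*k):R) * hKey k
    + (N.choose (2*k):R) * A (4*k + s) * hpow

theorem stmt7 (F : ℤ → ℤ) (hF0 : F 0 = 0) (hF1 : F 1 = 1)
    (hF : ∀ j : ℤ, F j = F (j - 1) + F (j - 2)) (L : ℤ → ℤ) (hL0 : L 0 = 2) (hL1 : L 1 = 1)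
    (hL : ∀ j : ℤ, L j = L (j - 1) + L (j - 2)) (n : ℕ) (hn : 0 < n) (s j : ℤ) :
    2 * ∑ k ∈ Finset.range n, ((2 * n - 1).choose (2 * k) : ℤ) * L (j * (4 * (k : ℤ) + s))
      = (-1 : ℤ) ^ j.natAbs *
        (L j ^ (2 * n - 1) * L (j * (2 * (n : ℤ) + s - 1))
          - 5 ^ n * F j ^ (2 * n - 1) * F (j * (2 * (n : ℤ) + s - 1))) := by
  have hAF := addFL F L hF0 hF1 hF hL0 hL1 hL
  have hPar := parFL F L hF0 hF1 hF hL0 hL1 hL j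
  set e : ℤ := (-1 : ℤ) ^ j.natAbs with he
  set c : ℤ := L j with hc
  set d : ℤ := F j with hd
  set N : ℕ := 2 * n - 1 with hNdef
  have hN : N + 1 = 2 * n := by omega
  have hN1 : N - 1 + 1 = N := by omega
  have hNodd : N = 2 * (n - 1) + 1 := by omega
  -- the Zsqrtd 5 setting
  set A : ℤ → ℤ√5 := fun m => ⟨L (j * m), F (j * m)⟩ with hA
  have hm : ∀ a b : ℤ, A a * A b = 2 * A (a + b) := by
    intro a b
    have h1 := (hAF (j*a) (j*b)).1
    have h2 := (hAF (j*a) (j*b)).2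
    rw [show j*a + j*b = j*(a+b) by ring] at h1 h2
    ext
    · simp only [hA, Zsqrtd.re_mul, Zsqrtd.im_mul, Zsqrtd.re_ofNat, Zsqrtd.im_ofNat]
      push_cast
      linarith
    · simp only [hA, Zsqrtd.re_mul, Zsqrtd.im_mul, Zsqrtd.re_ofNat, Zsqrtd.im_ofNat]
      push_cast
      linarith
  set u : ℤ√5 := A 1 with hu
  have hu_eq : u = ⟨c, d⟩ := by simp [hu, hA, hc, hd]
  have hu2 : u ^ 2 = 2 * A 2 := by
    have := powA A hm 1 1
    norm_num at this
    exact this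
  -- main factorization
  have hW : A s * ((4 + u^2)^N + (4 - u^2)^N)
      = ((e : ℤ√5)) * (2^(2*N) * (A ((N:ℤ) + s) * (((c^N : ℤ) : ℤ√5) - ((5^(n-1) * d^N : ℤ) : ℤ√5) * Zsqrtd.sqrtd))) := by
    obtain ⟨M, hM⟩ : ∃ M : ℕ, N = M + 1 := ⟨N - 1, by omega⟩
    have hus : A s * u ^ N = 2^M * (2 * A ((N:ℤ) + s)) := by
      rw [hu, hM, powA A hm 1 M, show ((1:ℤ)*((M:ℕ)+1)) = ((M+1:ℕ) : ℤ) by push_cast; ring, ← hM]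
      rw [show A s * (2^M * A (N:ℤ)) = 2^M * (A (N:ℤ) * A s) by ring, hm]
    have oddN : Odd N := ⟨n-1, by omega⟩
    have hsq5 : (Zsqrtd.sqrtd : ℤ√5) * Zsqrtd.sqrtd = 5 := by
      ext <;> simp [Zsqrtd.re_mul, Zsqrtd.im_mul, Zsqrtd.re_ofNat, Zsqrtd.im_ofNat]
    have hsqrt : (Zsqrtd.sqrtd : ℤ√5) ^ N = (5:ℤ√5)^(n-1) * Zsqrtd.sqrtd := by
      rw [hNodd, pow_succ, pow_mul, show (Zsqrtd.sqrtd:ℤ√5)^2 = 5 from by rw [pow_two, hsq5]]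
    have hpw : (2:ℤ√5)^M * 2 * (2:ℤ√5)^N = (2:ℤ√5)^(2*N) := by
      rw [← pow_succ, ← pow_add, show M + 1 + N = 2*N by omega]
    rcases Int.even_or_odd j with hj | hj
    · have hee : e = 1 := by rw [he, (Int.natAbs_even.mpr hj).neg_one_pow]
      have hPar4 : c^2 - 5*d^2 = 4 := by rw [hPar, hee]; ring
      have g1 : (4:ℤ√5) + u^2 = u * (2 * (c:ℤ√5)) := by
        rw [hu_eq, pow_two]
        ext <;> simp [Zsqrtd.re_mul, Zsqrtd.im_mul, Zsqrtd.re_add, Zsqrtd.im_add,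
          Zsqrtd.re_intCast, Zsqrtd.im_intCast, Zsqrtd.re_ofNat, Zsqrtd.im_ofNat] <;> push_cast <;> linarith [hPar4]
      have g2 : (4:ℤ√5) - u^2 = -(u * (2 * (d:ℤ√5) * Zsqrtd.sqrtd)) := by
        rw [hu_eq, pow_two]
        ext <;> simp [Zsqrtd.re_mul, Zsqrtd.im_mul, Zsqrtd.re_add, Zsqrtd.im_add,
          Zsqrtd.re_sqrtd, Zsqrtd.im_sqrtd, Zsqrtd.re_neg, Zsqrtd.im_neg, Zsqrtd.re_sub, Zsqrtd.im_sub,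
          Zsqrtd.re_intCast, Zsqrtd.im_intCast, Zsqrtd.re_ofNat, Zsqrtd.im_ofNat] <;> push_cast <;> linarith [hPar4]
      calc A s * ((4 + u^2)^N + (4 - u^2)^N)
          = A s * ((u * (2 * (c:ℤ√5)))^N + (-(u * (2 * (d:ℤ√5) * Zsqrtd.sqrtd)))^N) := by rw [g1, g2]
        _ = (A s * u^N) * ((2:ℤ√5)^N * (c:ℤ√5)^N - (2:ℤ√5)^N * ((d:ℤ√5)^N * ((5:ℤ√5)^(n-1) * Zsqrtd.sqrtd))) := by
            rw [oddN.neg_pow, mul_pow, mul_pow, mul_pow, mul_pow, mul_pow, hsqrt]; ring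
        _ = (2^M * (2 * A ((N:ℤ) + s))) * ((2:ℤ√5)^N * (c:ℤ√5)^N - (2:ℤ√5)^N * ((d:ℤ√5)^N * ((5:ℤ√5)^(n-1) * Zsqrtd.sqrtd))) := by
            rw [hus]
        _ = ((e : ℤ√5)) * (2^(2*N) * (A ((N:ℤ) + s) * (((c^N : ℤ) : ℤ√5) - ((5^(n-1) * d^N : ℤ) : ℤ√5) * Zsqrtd.sqrtd))) := by
            rw [hee]
            push_cast
            linear_combination (A ((N:ℤ) + s) * ((c:ℤ√5)^N - (5:ℤ√5)^(n-1) * (d:ℤ√5)^N * Zsqrtd.sqrtd)) * hpw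
    · have hee : e = -1 := by rw [he, (Int.natAbs_odd.mpr hj).neg_one_pow]
      have hPar4 : c^2 - 5*d^2 = -4 := by rw [hPar, hee]; ring
      have g1 : (4:ℤ√5) + u^2 = u * (2 * (d:ℤ√5) * Zsqrtd.sqrtd) := by
        rw [hu_eq, pow_two]
        ext <;> simp [Zsqrtd.re_mul, Zsqrtd.im_mul, Zsqrtd.re_add, Zsqrtd.im_add,
          Zsqrtd.re_sqrtd, Zsqrtd.im_sqrtd,
          Zsqrtd.re_intCast, Zsqrtd.im_intCast, Zsqrtd.re_ofNat, Zsqrtd.im_ofNat] <;> push_cast <;> linarith [hPar4]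
      have g2 : (4:ℤ√5) - u^2 = -(u * (2 * (c:ℤ√5))) := by
        rw [hu_eq, pow_two]
        ext <;> simp [Zsqrtd.re_mul, Zsqrtd.im_mul, Zsqrtd.re_add, Zsqrtd.im_add,
          Zsqrtd.re_neg, Zsqrtd.im_neg, Zsqrtd.re_sub, Zsqrtd.im_sub,
          Zsqrtd.re_intCast, Zsqrtd.im_intCast, Zsqrtd.re_ofNat, Zsqrtd.im_ofNat] <;> push_cast <;> linarith [hPar4]
      calc A s * ((4 + u^2)^N + (4 - u^2)^N)
          = A s * ((u * (2 * (d:ℤ√5) * Zsqrtd.sqrtd))^N + (-(u * (2 * (c:ℤ√5))))^N) := by rw [g1, g2]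
        _ = (A s * u^N) * ((2:ℤ√5)^N * ((d:ℤ√5)^N * ((5:ℤ√5)^(n-1) * Zsqrtd.sqrtd)) - (2:ℤ√5)^N * (c:ℤ√5)^N) := by
            rw [oddN.neg_pow, mul_pow, mul_pow, mul_pow, mul_pow, mul_pow, hsqrt]; ring
        _ = (2^M * (2 * A ((N:ℤ) + s))) * ((2:ℤ√5)^N * ((d:ℤ√5)^N * ((5:ℤ√5)^(n-1) * Zsqrtd.sqrtd)) - (2:ℤ√5)^N * (c:ℤ√5)^N) := by
            rw [hus]
        _ = ((e : ℤ√5)) * (2^(2*N) * (A ((N:ℤ) + s) * (((c^N : ℤ) : ℤ√5) - ((5^(n-1) * d^N : ℤ) : ℤ√5) * Zsqrtd.sqrtd))) := by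
            rw [hee]
            push_cast
            linear_combination (-(A ((N:ℤ) + s)) * ((c:ℤ√5)^N - (5:ℤ√5)^(n-1) * (d:ℤ√5)^N * Zsqrtd.sqrtd)) * hpw
  -- binomial side
  have hStar := ringMain A hm s n N hN
  have hchain : (2:ℤ√5)^N * (A s * ((2 + A 2)^N + (2 - A 2)^N))
      = A s * ((4 + u^2)^N + (4 - u^2)^N) := by
    have e1 : (2:ℤ√5) * (2 + A 2) = 4 + u^2 := by rw [hu2]; ring
    have e2 : (2:ℤ√5) * (2 - A 2) = 4 - u^2 := by rw [hu2]; ring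
    calc (2:ℤ√5)^N * (A s * ((2 + A 2)^N + (2 - A 2)^N))
        = A s * (((2:ℤ√5) * (2 + A 2))^N + ((2:ℤ√5) * (2 - A 2))^N) := by
          rw [mul_pow, mul_pow]; ring
      _ = _ := by rw [e1, e2]
  have hfinal : (2:ℤ√5)^(2*N) * (2 * ∑ k ∈ Finset.range n, (N.choose (2*k) : ℤ√5) * A (4*k + s))
      = (2:ℤ√5)^(2*N) * (((e : ℤ√5)) * (A ((N:ℤ) + s) * (((c^N : ℤ) : ℤ√5) - ((5^(n-1) * d^N : ℤ) : ℤ√5) * Zsqrtd.sqrtd))) := by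
    have h := congrArg (fun z => (2:ℤ√5)^N * z) hStar
    rw [hchain, hW] at h
    have hp : (2:ℤ√5)^(2*N) * 2 = 2^N * 2^(2*n) := by
      rw [← pow_succ, ← pow_add]; congr 1; omega
    calc (2:ℤ√5)^(2*N) * (2 * ∑ k ∈ Finset.range n, (N.choose (2*k) : ℤ√5) * A (4*k + s))
        = (2:ℤ√5)^N * ((2:ℤ√5)^(2*n) * ∑ k ∈ Finset.range n, (N.choose (2*k) : ℤ√5) * A (4*k + s)) := by
          rw [← mul_assoc, hp, mul_assoc]
      _ = ((e : ℤ√5)) * (2^(2*N) * (A ((N:ℤ) + s) * (((c^N : ℤ) : ℤ√5) - ((5^(n-1) * d^N : ℤ) : ℤ√5) * Zsqrtd.sqrtd))) := h.symm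
      _ = _ := by ring
  -- extract real parts
  have h2cast : (2:ℤ√5)^(2*N) = ((2^(2*N) : ℤ) : ℤ√5) := by push_cast; ring
  rw [h2cast] at hfinal
  have hre := congrArg Zsqrtd.re hfinal
  have φdef : ∀ z w : ℤ√5, (z + w).re = z.re + w.re := fun _ _ => rfl
  set φ : ℤ√5 →+ ℤ := { toFun := Zsqrtd.re, map_zero' := rfl, map_add' := fun _ _ => rfl } with hφ
  have hsum_re : (∑ k ∈ Finset.range n, ((N.choose (2*k) : ℤ√5) * A (4*k + s))).re
      = ∑ k ∈ Finset.range n, ((N.choose (2*k) : ℤ) * L (j * (4*(k:ℤ) + s))) := by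
    have : (∑ k ∈ Finset.range n, ((N.choose (2*k) : ℤ√5) * A (4*k + s))).re
        = φ (∑ k ∈ Finset.range n, ((N.choose (2*k) : ℤ√5) * A (4*k + s))) := rfl
    rw [this, map_sum]
    refine Finset.sum_congr rfl fun k _ => ?_
    show ((N.choose (2*k) : ℤ√5) * A (4*k + s)).re = _
    simp [hA, Zsqrtd.re_mul, Zsqrtd.re_natCast, Zsqrtd.im_natCast]
  have hL_re : ((2^(2*N) : ℤ) : ℤ√5).re = 2^(2*N) := Zsqrtd.re_intCast _
  -- compute both sides' re
  have hlhs : (( ((2^(2*N) : ℤ) : ℤ√5)) * (2 * ∑ k ∈ Finset.range n, (N.choose (2*k) : ℤ√5) * A (4*k + s))).re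
      = 2^(2*N) * (2 * ∑ k ∈ Finset.range n, ((N.choose (2*k) : ℤ) * L (j * (4*(k:ℤ) + s)))) := by
    rw [Zsqrtd.re_smul]
    congr 1
    have : (2 * ∑ k ∈ Finset.range n, (N.choose (2*k) : ℤ√5) * A (4*k + s)).re
        = 2 * (∑ k ∈ Finset.range n, (N.choose (2*k) : ℤ√5) * A (4*k + s)).re := by
      rw [show (2:ℤ√5) = ((2:ℤ):ℤ√5) by push_cast; ring, Zsqrtd.re_smul]
    rw [this, hsum_re]
  have hrhs : ((((2^(2*N) : ℤ) : ℤ√5)) * (((e : ℤ√5)) * (A ((N:ℤ) + s) * (((c^N : ℤ) : ℤ√5) - ((5^(n-1) * d^N : ℤ) : ℤ√5) * Zsqrtd.sqrtd)))).re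
      = 2^(2*N) * (e * (c^N * L (j * ((N:ℤ) + s)) - 5 * 5^(n-1) * d^N * F (j * ((N:ℤ) + s)))) := by
    have hWre : ((((c^N : ℤ) : ℤ√5)) - ((5^(n-1) * d^N : ℤ) : ℤ√5) * Zsqrtd.sqrtd).re = c^N := by
      rw [Zsqrtd.re_sub, Zsqrtd.re_mul, Zsqrtd.re_intCast, Zsqrtd.re_intCast, Zsqrtd.im_intCast,
        Zsqrtd.re_sqrtd, Zsqrtd.im_sqrtd]
      ring
    have hWim : ((((c^N : ℤ) : ℤ√5)) - ((5^(n-1) * d^N : ℤ) : ℤ√5) * Zsqrtd.sqrtd).im = -(5^(n-1) * d^N) := by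
      rw [Zsqrtd.im_sub, Zsqrtd.im_mul, Zsqrtd.im_intCast, Zsqrtd.re_intCast, Zsqrtd.im_intCast,
        Zsqrtd.re_sqrtd, Zsqrtd.im_sqrtd]
      ring
    rw [Zsqrtd.re_smul, Zsqrtd.re_smul, Zsqrtd.re_mul, hWre, hWim]
    show 2^(2*N) * (e * (L (j*((N:ℤ)+s)) * c^N + 5 * F (j*((N:ℤ)+s)) * -(5^(n-1)*d^N))) = _
    ring
  rw [hlhs, hrhs] at hre
  have hcancel := mul_left_cancel₀ (a := (2:ℤ)^(2*N)) (pow_ne_zero _ two_ne_zero) hre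
  have harg : (N:ℤ) + s = 2*(n:ℤ) + s - 1 := by omega
  have h5 : (5:ℤ)^n = 5^(n-1) * 5 := by
    rw [← pow_succ]; congr 1; omega
  rw [harg] at hcancel
  rw [hcancel, h5]
  ring
end

section
/- For every non-negative integer n and every integer s, 2 * ∑_{k=1}^{⌈n/2⌉} C(n, 2k-1) * L(2k+s) = L(2n+s+1) + (-1)^s * L(n-s-1), where L is the Lucas sequence extended to all integers. -/
private lemma binom_step (n : ℕ) (f : ℕ → ℤ) :
    ∑ j ∈ Finset.range (n+2), ((n+1).choose j : ℤ) * f j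
      = ∑ j ∈ Finset.range (n+1), (n.choose j : ℤ) * (f j + f (j+1)) := by
  rw [Finset.sum_range_succ' (fun j => ((n+1).choose j : ℤ) * f j) (n+1)]
  have h1 : ∀ j, (((n+1).choose (j+1) : ℕ) : ℤ) = n.choose j + n.choose (j+1) := by
    intro j; exact_mod_cast congrArg (Nat.cast : ℕ → ℤ) (Nat.choose_succ_succ n j)
  have h2 : ∑ j ∈ Finset.range (n+1), (n.choose (j+1) : ℤ) * f (j+1) + (n.choose 0 : ℤ) * f 0
      = ∑ j ∈ Finset.range (n+1), (n.choose j : ℤ) * f j := by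
    rw [← Finset.sum_range_succ' (fun j => (n.choose j : ℤ) * f j) (n+1),
      Finset.sum_range_succ, Nat.choose_succ_self]
    simp
  simp only [h1, add_mul, mul_add]
  rw [Finset.sum_add_distrib, Finset.sum_add_distrib, ← h2]
  simp
  ring

variable {L : ℤ → ℤ}

private lemma Lrec (hL : ∀ j : ℤ, L j = L (j - 1) + L (j - 2)) : ∀ j : ℤ, L (j + 2) = L (j + 1) + L j := by
  intro j
  have h := hL (j + 2)
  have e1 : j + 2 - 1 = j + 1 := by ring
  have e2 : j + 2 - 2 = j := by ring
  rw [e1, e2] at h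
  exact h

private lemma sum1 (hL : ∀ j : ℤ, L j = L (j - 1) + L (j - 2)) : ∀ n : ℕ, ∀ t : ℤ,
    ∑ j ∈ Finset.range (n+1), (n.choose j : ℤ) * L ((j : ℤ) + t) = L (2 * n + t) := by
  intro n
  induction n with
  | zero => intro t; simp
  | succ m ih =>
    intro t
    rw [show m + 1 + 1 = m + 2 from rfl,
      binom_step m (fun j => L ((j : ℤ) + t))]
    have : ∀ j : ℕ, L ((j : ℤ) + t) + L ((j + 1 : ℕ) + t) = L ((j : ℤ) + (t + 2)) := by
      intro j
      have := Lrec hL ((j : ℤ) + t)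
      push_cast
      rw [show (j : ℤ) + (t + 2) = (j : ℤ) + t + 2 from by ring,
        show (j : ℤ) + 1 + t = (j : ℤ) + t + 1 from by ring, this]
      ring
    simp only [this]
    rw [ih (t + 2)]
    ring_nf
    push_cast
    ring_nf

private lemma sum2 (hL : ∀ j : ℤ, L j = L (j - 1) + L (j - 2)) : ∀ n : ℕ, ∀ t : ℤ,
    ∑ j ∈ Finset.range (n+1), (n.choose j : ℤ) * ((-1 : ℤ)^j * L ((j : ℤ) + t))
      = (-1 : ℤ)^n * L (t - n) := by
  intro n
  induction n with
  | zero => intro t; simp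
  | succ m ih =>
    intro t
    rw [show m + 1 + 1 = m + 2 from rfl,
      binom_step m (fun j => (-1 : ℤ)^j * L ((j : ℤ) + t))]
    have key : ∀ j : ℕ, (-1 : ℤ)^j * L ((j : ℤ) + t) + (-1 : ℤ)^(j+1) * L ((j + 1 : ℕ) + t)
        = -((-1 : ℤ)^j * L ((j : ℤ) + (t - 1))) := by
      intro j
      have h := Lrec hL ((j : ℤ) + t - 1)
      have e1 : (j : ℤ) + t - 1 + 2 = (j : ℤ) + 1 + t := by ring
      have e2 : (j : ℤ) + t - 1 + 1 = (j : ℤ) + t := by ring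
      rw [e1, e2] at h
      push_cast
      rw [show (j : ℤ) + (t - 1) = (j : ℤ) + t - 1 from by ring]
      rw [pow_succ]
      have : L ((j:ℤ) + t - 1) = L ((j:ℤ) + 1 + t) - L ((j:ℤ) + t) := by linarith
      rw [this]
      ring
    simp only [key]
    have : ∑ j ∈ Finset.range (m+1), (m.choose j : ℤ) * -((-1 : ℤ)^j * L ((j : ℤ) + (t - 1)))
        = -∑ j ∈ Finset.range (m+1), (m.choose j : ℤ) * ((-1 : ℤ)^j * L ((j : ℤ) + (t - 1))) := by
      rw [← Finset.sum_neg_distrib]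
      exact Finset.sum_congr rfl (fun j _ => by ring)
    rw [this, ih (t - 1)]
    rw [pow_succ]
    have : t - 1 - (m : ℤ) = t - ((m : ℕ) + 1 : ℕ) := by push_cast; ring
    rw [this]
    ring


private def ee : ℤ → ℤ := fun j => if Even j then 1 else -1

private lemma ee_succ (j : ℤ) : ee (j + 1) = -ee j := by
  unfold ee
  by_cases h : Even j <;> simp [h, Int.even_add_one]

private lemma ee_congr {a b : ℤ} (h : Even (a - b)) : ee a = ee b := by
  unfold ee
  have := Int.even_sub.mp h
  by_cases hb : Even b <;> simp [hb, this]

private lemma ee_mul (a b : ℤ) : ee a * ee b = ee (a + b) := by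
  unfold ee
  by_cases ha : Even a <;> by_cases hb : Even b <;>
    simp [ha, hb, Int.even_add, iff_true, iff_false]

private lemma ee_natAbs (s : ℤ) : (-1 : ℤ) ^ s.natAbs = ee s := by
  unfold ee
  by_cases h : Even s
  · rw [(Int.natAbs_even.mpr h).neg_one_pow, if_pos h]
  · rw [(Int.natAbs_odd.mpr (Int.not_even_iff_odd.mp h)).neg_one_pow, if_neg h]

private lemma Lneg (hL0 : L 0 = 2) (hL1 : L 1 = 1)
    (hL : ∀ j : ℤ, L j = L (j - 1) + L (j - 2)) :
    ∀ j : ℤ, L (-j) = ee j * L j := by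
  have key : ∀ j : ℤ, L (-j) = ee j * L j ∧ L (-j - 1) = ee (j + 1) * L (j + 1) := by
    intro j
    induction j using Int.induction_on with
    | zero =>
      constructor
      · simp [ee, hL0]
      · have h := hL 1
        simp at h
        have : L (-1) = L 1 - L 0 := by linarith
        simp [this, hL0, hL1, ee]
    | succ i ih =>
      obtain ⟨h1, h2⟩ := ih
      refine ⟨by rw [show -((i:ℤ)+1) = -(i:ℤ) - 1 from by ring]; exact h2, ?_⟩
      have hr := hL (-(i:ℤ))
      have e1 : -(i:ℤ) - 1 = -((i:ℤ)) - 1 := rfl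
      have hfwd := Lrec hL (i : ℤ)
      have hc : L (-(i:ℤ) - 2) = L (-(i:ℤ)) - L (-(i:ℤ) - 1) := by linarith
      have eq1 : -((i:ℤ)+1) - 1 = -(i:ℤ) - 2 := by ring
      rw [eq1, hc, h1, h2]
      have e2 : ee ((i:ℤ) + 1 + 1) = ee (i:ℤ) := by
        rw [ee_succ, ee_succ]; ring
      rw [e2, ee_succ, show (i:ℤ) + 1 + 1 = (i:ℤ) + 2 from by ring, hfwd]
      ring
    | pred i ih =>
      obtain ⟨h1, h2⟩ := ih
      constructor
      · have hr := hL (1 - (-(i:ℤ)))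
        have e1 : 1 - (-(i:ℤ)) - 1 = -(-(i:ℤ)) := by ring
        have e2 : 1 - (-(i:ℤ)) - 2 = -(-(i:ℤ)) - 1 := by ring
        rw [e1, e2, h1, h2] at hr
        have hfwd := hL (-(i:ℤ) + 1)
        have e3 : -(i:ℤ) + 1 - 1 = -(i:ℤ) := by ring
        have e4 : -(i:ℤ) + 1 - 2 = -(i:ℤ) - 1 := by ring
        rw [e3, e4] at hfwd
        have e5 : -(-(i:ℤ) - 1) = 1 - (-(i:ℤ)) := by ring
        rw [e5, hr]
        have e6 : ee (-(i:ℤ) - 1) = -ee (-(i:ℤ)) := by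
          rw [show -(i:ℤ) = -(i:ℤ) - 1 + 1 from by ring, ee_succ]; ring
        rw [e6, ee_succ]
        linear_combination (-ee (-(i:ℤ))) * hfwd
      · have e7 : -(-(i:ℤ) - 1) - 1 = -(-(i:ℤ)) := by ring
        have e8 : -(i:ℤ) - 1 + 1 = -(i:ℤ) := by ring
        rw [e7, e8, h1]
  intro j; exact (key j).1

theorem stmt11 (L : ℤ → ℤ) (hL0 : L 0 = 2) (hL1 : L 1 = 1)
    (hL : ∀ j : ℤ, L j = L (j - 1) + L (j - 2)) (n : ℕ) (s : ℤ) :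
    2 * ∑ k ∈ Finset.Icc 1 ((n + 1) / 2), (n.choose (2 * k - 1) : ℤ) * L (2 * (k : ℤ) + s)
      = L (2 * (n : ℤ) + s + 1) + (-1 : ℤ) ^ s.natAbs * L ((n : ℤ) - s - 1) := by
  have hT := sum1 hL n (s + 1)
  have hA := sum2 hL n (s + 1)
  -- step 1: Icc sum equals odd-filter sum
  have hbij : ∑ k ∈ Finset.Icc 1 ((n + 1) / 2), (n.choose (2 * k - 1) : ℤ) * L (2 * (k : ℤ) + s)
      = ∑ j ∈ (Finset.range (n+1)).filter (fun j => ¬ Even j),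
          (n.choose j : ℤ) * L ((j : ℤ) + (s + 1)) := by
    refine Finset.sum_bij' (fun k _ => 2 * k - 1) (fun j _ => (j + 1) / 2) ?_ ?_ ?_ ?_ ?_
    · intro k hk
      simp only [Finset.mem_Icc] at hk
      simp only [Finset.mem_filter, Finset.mem_range, Nat.not_even_iff]
      omega
    · intro j hj
      simp only [Finset.mem_filter, Finset.mem_range, Nat.not_even_iff] at hj
      simp only [Finset.mem_Icc]
      omega
    · intro k hk
      simp only [Finset.mem_Icc] at hk
      omega
    · intro j hj
      simp only [Finset.mem_filter, Finset.mem_range, Nat.not_even_iff] at hj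
      omega
    · intro k hk
      simp only [Finset.mem_Icc] at hk
      have h1 : 1 ≤ 2 * k := by omega
      have hc : ((2 * k - 1 : ℕ) : ℤ) = 2 * (k : ℤ) - 1 := by
        push_cast [Nat.cast_sub h1]; ring
      rw [hc, show 2 * (k : ℤ) - 1 + (s + 1) = 2 * (k : ℤ) + s from by ring]
  -- step 2: odd-filter sum from T - A
  have hsplit : ∑ j ∈ Finset.range (n+1), ((n.choose j : ℤ) * L ((j : ℤ) + (s + 1))
        - (n.choose j : ℤ) * ((-1 : ℤ)^j * L ((j : ℤ) + (s + 1))))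
      = ∑ j ∈ (Finset.range (n+1)).filter (fun j => ¬ Even j),
          2 * ((n.choose j : ℤ) * L ((j : ℤ) + (s + 1))) := by
    rw [Finset.sum_filter]
    refine Finset.sum_congr rfl (fun j _ => ?_)
    rcases Nat.even_or_odd j with h | h
    · rw [if_neg (by simpa using h), h.neg_one_pow]; ring
    · rw [if_pos (by simpa using h), h.neg_one_pow]; ring
  rw [Finset.sum_sub_distrib, hT, hA] at hsplit
  rw [← Finset.mul_sum] at hsplit
  -- step 3: sign bookkeeping
  have hneg := Lneg hL0 hL1 hL ((n : ℤ) - s - 1)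
  rw [show -((n : ℤ) - s - 1) = s + 1 - (n : ℤ) from by ring] at hneg
  have hn1 : (-1 : ℤ)^n = ee (n : ℤ) := by
    rw [← ee_natAbs (n : ℤ)]; simp
  have hsign : -(ee (n : ℤ) * ee ((n : ℤ) - s - 1)) = (-1 : ℤ) ^ s.natAbs := by
    rw [ee_mul, ee_natAbs]
    have h1 : ee ((n : ℤ) + ((n : ℤ) - s - 1)) = ee (s + 1) := by
      apply ee_congr
      refine ⟨(n : ℤ) - s - 1, by ring⟩
    rw [h1, show s + 1 = s + 1 from rfl, ee_succ]
    ring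
  rw [hbij, ← hsplit, hn1, hneg, ← hsign,
    show (2 * (n : ℕ) : ℤ) + (s + 1) = 2 * (n : ℤ) + s + 1 from by ring]
  ring
end

section
/- For every positive integer n and every integer s, ∑_{k=1}^{n} C(2n-1, 2k-1) * F(6k+s) = 4^(n-1) * (F(4n+1+s) + F(2n+2+s)). -/
open Matrix Finset

private abbrev M2 : Type := Matrix (Fin 2) (Fin 2) ℤ

private def Mm : M2 := !![1,1;1,0]

private def Um : M2ˣ := ⟨Mm, !![0,1;1,-1], by decide, by decide⟩

private lemma sum_range_even_odd (n : ℕ) (g : ℕ → M2) :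
    ∑ j ∈ range (2*n), g j = ∑ k ∈ range n, (g (2*k) + g (2*k+1)) := by
  induction n with
  | zero => simp
  | succ m ih =>
    rw [Finset.sum_range_succ, ← ih, show 2*(m+1) = (2*m+1)+1 by ring,
      Finset.sum_range_succ, Finset.sum_range_succ, add_assoc]

private lemma key_s12 (n : ℕ) (hn : 0 < n) :
    (2:ℤ) • (∑ k ∈ Icc 1 n, ((2*n-1).choose (2*k-1) : ℤ) • Mm^(6*k))
      = (2:ℤ) • ((4:ℤ)^(n-1) • (Mm^(4*n+1) + Mm^(2*n+2))) := by
  have d1 : Mm^3 + 1 = (2:ℤ) • Mm^2 := by decide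
  have d2 : Mm^3 + -1 = (2:ℤ) • Mm := by decide
  set N := 2*n-1 with hN
  have hNr : N + 1 = 2*n := by omega
  have hc : ∀ (m c : ℕ), (Mm^3)^m * (c : M2) = (c:ℤ) • (Mm^3)^m := by
    intro m c
    rw [zsmul_eq_mul, Int.cast_natCast, (Nat.cast_commute c _).eq]
  have e1 : (Mm^3 + 1)^N = ∑ j ∈ range (2*n), (Mm^3)^j * 1^(N-j) * (N.choose j : M2) := by
    rw [← hNr]; exact (Commute.one_right (Mm^3)).add_pow N
  have e2 : (Mm^3 + -1)^N = ∑ j ∈ range (2*n), (Mm^3)^j * (-1)^(N-j) * (N.choose j : M2) := by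
    rw [← hNr]; exact ((Commute.one_right (Mm^3)).neg_right).add_pow N
  have combine : (Mm^3+1)^N + (Mm^3 + -1)^N
      = ∑ k ∈ range n, (2:ℤ) • ((N.choose (2*k+1) : ℤ) • (Mm^3)^(2*k+1)) := by
    rw [e1, e2, ← Finset.sum_add_distrib, sum_range_even_odd]
    refine Finset.sum_congr rfl ?_
    intro k hk
    have hk' : k < n := Finset.mem_range.mp hk
    have ho : Odd (N - 2*k) := ⟨n-1-k, by omega⟩
    have he : Even (N - (2*k+1)) := ⟨n-1-k, by omega⟩
    rw [Odd.neg_one_pow ho, Even.neg_one_pow he]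
    simp [one_pow, mul_one, mul_neg_one, neg_mul, hc, two_smul]
  have reindex : ∑ k ∈ Icc 1 n, ((2*n-1).choose (2*k-1) : ℤ) • Mm^(6*k)
      = ∑ k ∈ range n, (N.choose (2*k+1) : ℤ) • Mm^(6*k+6) := by
    rw [← Finset.Ico_add_one_right_eq_Icc, Finset.sum_Ico_eq_sum_range]
    simp only [Nat.add_sub_cancel]
    refine Finset.sum_congr rfl ?_
    intro i _
    have h1 : 2*(1+i)-1 = 2*i+1 := by omega
    have h2 : 6*(1+i) = 6*i+6 := by omega
    rw [h1, h2]
  have pow_split : ∀ k : ℕ, Mm^(6*k+6) = Mm^3 * (Mm^3)^(2*k+1) := by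
    intro k
    rw [← pow_mul, ← pow_add]
    congr 1
    omega
  calc (2:ℤ) • (∑ k ∈ Icc 1 n, ((2*n-1).choose (2*k-1) : ℤ) • Mm^(6*k))
      = Mm^3 * (∑ k ∈ range n, (2:ℤ) • ((N.choose (2*k+1) : ℤ) • (Mm^3)^(2*k+1))) := by
        rw [reindex, Finset.mul_sum, Finset.smul_sum]
        refine Finset.sum_congr rfl ?_
        intro k _
        rw [pow_split, mul_smul_comm, mul_smul_comm]
    _ = Mm^3 * ((2:ℤ)^N • ((Mm^2)^N + Mm^N)) := by
        rw [← combine, d1, d2, smul_pow, smul_pow, smul_add]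
    _ = (2:ℤ)^N • (Mm^(2*N+3) + Mm^(N+3)) := by
        rw [mul_smul_comm, mul_add, ← pow_mul, ← pow_add, ← pow_add]
        ring_nf
    _ = (2:ℤ) • ((4:ℤ)^(n-1) • (Mm^(4*n+1) + Mm^(2*n+2))) := by
        rw [smul_smul]
        have h1 : 2*N+3 = 4*n+1 := by omega
        have h2 : N+3 = 2*n+2 := by omega
        have h3 : (2:ℤ)^N = 2 * 4^(n-1) := by
          have : N = 2*(n-1)+1 := by omega
          rw [this, pow_succ, pow_mul]
          norm_num [mul_comm]
        rw [h1, h2, h3]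

private lemma Um_zpow (F : ℤ → ℤ) (hF0 : F 0 = 0) (hF1 : F 1 = 1)
    (hF : ∀ j : ℤ, F j = F (j-1) + F (j-2)) :
    ∀ j : ℤ, ((Um^j : M2ˣ) : M2) = !![F (j+1), F j; F j, F (j-1)] := by
  have e : ∀ j : ℤ, F (j+2) = F (j+1) + F j := by
    intro j
    have := hF (j+2)
    rw [show j+2-1 = j+1 by ring, show j+2-2 = j by ring] at this
    exact this
  have hFm1 : F (-1) = 1 := by
    have := hF 1
    norm_num at this
    rw [hF0, hF1] at this
    linarith
  intro j
  induction j using Int.induction_on with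
  | zero =>
    rw [zpow_zero, Units.val_one]
    norm_num [hF0, hF1, hFm1]
    exact one_fin_two
  | succ i ih =>
    rw [_root_.zpow_add_one, Units.val_mul, ih]
    show _ * Mm = _
    rw [Mm, mul_fin_two]
    have e1 := e (i:ℤ); ring_nf at e1
    have e0 := e ((i:ℤ)-1); ring_nf at e0
    ext a b
    fin_cases a <;> fin_cases b <;> simp <;> ring_nf <;> linarith [e0, e1]
  | pred i ih =>
    rw [sub_eq_add_neg, _root_.zpow_add, _root_.zpow_neg_one, Units.val_mul, ih]
    show _ * !![0,1;1,-1] = _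
    rw [mul_fin_two]
    have e1 := e (-(i:ℤ)-1); ring_nf at e1
    have e2 := e (-(i:ℤ)-2); ring_nf at e2
    have e3 := e (-(i:ℤ)); ring_nf at e3
    ext a b
    fin_cases a <;> fin_cases b <;> simp <;> ring_nf <;> linarith [e1, e2, e3]

theorem stmt12 (F : ℤ → ℤ) (hF0 : F 0 = 0) (hF1 : F 1 = 1)
    (hF : ∀ j : ℤ, F j = F (j - 1) + F (j - 2)) (n : ℕ) (hn : 0 < n) (s : ℤ) :
    ∑ k ∈ Finset.Icc 1 n, ((2 * n - 1).choose (2 * k - 1) : ℤ) * F (6 * (k : ℤ) + s)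
      = 4 ^ (n - 1) * (F (4 * (n : ℤ) + 1 + s) + F (2 * (n : ℤ) + 2 + s)) := by
  have hU := Um_zpow F hF0 hF1 hF
  have hFe : ∀ j : ℤ, F j = ((Um^j : M2ˣ) : M2) 0 1 := by
    intro j; rw [hU]; simp
  set V : M2 := ((Um^s : M2ˣ) : M2) with hV
  have hsplit : ∀ m : ℕ, F ((m:ℤ) + s) = (Mm^m * V) 0 1 := by
    intro m
    rw [hFe ((m:ℤ)+s), _root_.zpow_add, zpow_natCast, Units.val_mul, Units.val_pow_eq_pow_val]
    rfl
  have hL : ∑ k ∈ Finset.Icc 1 n, ((2 * n - 1).choose (2 * k - 1) : ℤ) * F (6 * (k : ℤ) + s)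
      = ((∑ k ∈ Icc 1 n, ((2*n-1).choose (2*k-1) : ℤ) • Mm^(6*k)) * V) 0 1 := by
    rw [Finset.sum_mul, Matrix.sum_apply]
    refine Finset.sum_congr rfl ?_
    intro k hk
    have hcast : (6*(k:ℤ)+s) = ((6*k : ℕ) : ℤ) + s := by push_cast; ring
    rw [hcast, hsplit, smul_mul_assoc, Matrix.smul_apply, smul_eq_mul]
  have hR : (4:ℤ)^(n-1) * (F (4*(n:ℤ)+1+s) + F (2*(n:ℤ)+2+s))
      = (4:ℤ)^(n-1) * (((Mm^(4*n+1) + Mm^(2*n+2)) * V) 0 1) := by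
    have c1 : 4*(n:ℤ)+1+s = ((4*n+1 : ℕ) : ℤ) + s := by push_cast; ring
    have c2 : 2*(n:ℤ)+2+s = ((2*n+2 : ℕ) : ℤ) + s := by push_cast; ring
    rw [c1, c2, hsplit, hsplit, Matrix.add_mul, Matrix.add_apply]
  rw [hL, hR]
  have hk := key_s12 n hn
  have hkv := congrArg (fun A : M2 => (A * V) 0 1) hk
  simp only [smul_mul_assoc, Matrix.smul_apply, smul_eq_mul] at hkv
  linarith
end

section
/- For every positive integer n and every integer s, ∑_{k=1}^{n} C(2n-1, 2k-1) * L(6k+s) = 4^(n-1) * (L(4n+1+s) + L(2n+2+s)). -/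
open Finset

lemma aux_two_mul_sum (f : ℕ → ℝ) (n : ℕ) :
    ∑ i ∈ Finset.range (2*n), f i = ∑ k ∈ Finset.range n, (f (2*k) + f (2*k+1)) := by
  induction n with
  | zero => simp
  | succ n ih =>
      rw [show 2*(n+1) = (2*n+1)+1 from by omega, Finset.sum_range_succ,
        Finset.sum_range_succ, ih, Finset.sum_range_succ]
      ring

lemma aux_oddpart (y : ℝ) (n : ℕ) (hn : 0 < n) :
    (1+y)^(2*n-1) - (1-y)^(2*n-1)
      = 2 * ∑ k ∈ Finset.Icc 1 n, ((2*n-1).choose (2*k-1) : ℝ) * y^(2*k-1) := by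
  have h1 : (1+y)^(2*n-1)
      = ∑ i ∈ Finset.range (2*n), y^i * 1^((2*n-1)-i) * ((2*n-1).choose i : ℝ) := by
    rw [add_comm, add_pow, show 2*n-1+1 = 2*n from by omega]
  have h2 : (1-y)^(2*n-1)
      = ∑ i ∈ Finset.range (2*n), (-y)^i * 1^((2*n-1)-i) * ((2*n-1).choose i : ℝ) := by
    rw [sub_eq_add_neg, add_comm, add_pow, show 2*n-1+1 = 2*n from by omega]
  have h3 : ∑ k ∈ Finset.Icc 1 n, ((2*n-1).choose (2*k-1):ℝ) * y^(2*k-1)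
      = ∑ j ∈ Finset.range n, ((2*n-1).choose (2*j+1):ℝ) * y^(2*j+1) := by
    rw [← Finset.Ico_add_one_right_eq_Icc, Finset.sum_Ico_eq_sum_range]
    refine Finset.sum_congr (by norm_num) ?_
    intro j hj
    rw [show 2*(1+j)-1 = 2*j+1 from by omega]
  rw [h1, h2, ← Finset.sum_sub_distrib, aux_two_mul_sum, h3, Finset.mul_sum]
  refine Finset.sum_congr rfl ?_
  intro j hj
  have e1 : (-y)^(2*j) = y^(2*j) := Even.neg_pow ⟨j, by omega⟩ y
  have e2 : (-y)^(2*j+1) = -(y^(2*j+1)) := Odd.neg_pow ⟨j, by omega⟩ y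
  rw [e1, e2]
  ring

lemma aux_zpow (x : ℝ) (hx : x^2 = x+1) (hx0 : x ≠ 0) (j : ℤ) :
    x^(j+2) = x^(j+1) + x^j := by
  rw [show j+2 = (j+1)+1 from by ring, zpow_add_one₀ hx0, zpow_add_one₀ hx0]
  linear_combination (x^j) * hx

lemma aux_binet (L : ℤ → ℤ) (hL : ∀ j : ℤ, L j = L (j - 1) + L (j - 2))
    (x y : ℝ) (hx : x^2 = x+1) (hy : y^2 = y+1) (hx0 : x ≠ 0) (hy0 : y ≠ 0)
    (h0 : (L 0 : ℝ) = 2) (h1 : (L 1 : ℝ) = x + y) :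
    ∀ j : ℤ, (L j : ℝ) = x^j + y^j := by
  have hrec : ∀ j : ℤ, (L (j+2) : ℝ) = L (j+1) + L j := by
    intro j
    have := hL (j+2)
    rw [show j+2-1 = j+1 from by ring, show j+2-2 = j from by ring] at this
    exact_mod_cast this
  suffices H : ∀ j : ℤ, ((L j : ℝ) = x^j + y^j) ∧ ((L (j+1) : ℝ) = x^(j+1) + y^(j+1)) from
    fun j => (H j).1
  intro j
  induction j using Int.induction_on with
  | zero =>
      refine ⟨by simp only [zpow_zero, h0]; norm_num, by simp only [zero_add, zpow_one, h1]⟩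
  | succ k ih =>
      obtain ⟨ihk, ihk1⟩ := ih
      refine ⟨ihk1, ?_⟩
      rw [show ((k:ℤ)+1+1 : ℤ) = (k:ℤ)+2 from by ring, hrec (k:ℤ), ihk, ihk1,
        aux_zpow x hx hx0 k, aux_zpow y hy hy0 k]
      ring
  | pred k ih =>
      obtain ⟨ihk, ihk1⟩ := ih
      constructor
      · have hr := hrec (-(k:ℤ)-1)
        rw [show (-(k:ℤ)-1+2 : ℤ) = -(k:ℤ)+1 from by ring,
          show (-(k:ℤ)-1+1 : ℤ) = -(k:ℤ) from by ring] at hr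
        have hxr := aux_zpow x hx hx0 (-(k:ℤ)-1)
        rw [show (-(k:ℤ)-1+2 : ℤ) = -(k:ℤ)+1 from by ring,
          show (-(k:ℤ)-1+1 : ℤ) = -(k:ℤ) from by ring] at hxr
        have hyr := aux_zpow y hy hy0 (-(k:ℤ)-1)
        rw [show (-(k:ℤ)-1+2 : ℤ) = -(k:ℤ)+1 from by ring,
          show (-(k:ℤ)-1+1 : ℤ) = -(k:ℤ) from by ring] at hyr
        rw [ihk] at hr
        rw [ihk1] at hr
        linarith [hr, hxr, hyr]
      · rw [show (-(k:ℤ)-1+1 : ℤ) = -(k:ℤ) from by ring]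
        exact ihk

lemma aux_root (x : ℝ) (hx : x^2 = x+1) (hx0 : x ≠ 0) (n : ℕ) (hn : 0 < n) (s : ℤ) :
    2 * ∑ k ∈ Finset.Icc 1 n, ((2*n-1).choose (2*k-1) : ℝ) * x^(6*(k:ℤ)+s)
      = 2^(2*n-1) * (x^(4*(n:ℤ)+1+s) + x^(2*(n:ℤ)+2+s)) := by
  have hx3 : x^3 = 2*x+1 := by linear_combination (x+1)*hx
  have hterm : ∀ k ∈ Finset.Icc 1 n, ((2*n-1).choose (2*k-1) : ℝ) * x^(6*(k:ℤ)+s)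
      = x^(s+3) * (((2*n-1).choose (2*k-1) : ℝ) * (x^3)^(2*k-1)) := by
    intro k hk
    have hk1 : 1 ≤ k := (Finset.mem_Icc.mp hk).1
    have hsplit : (6*(k:ℤ)+s) = (s+3) + ((6*k-3 : ℕ) : ℤ) := by omega
    rw [hsplit, zpow_add₀ hx0, zpow_natCast, show 6*k-3 = 3*(2*k-1) from by omega, pow_mul]
    ring
  rw [Finset.sum_congr rfl hterm, ← Finset.mul_sum]
  have hodd := aux_oddpart (x^3) n hn
  have e1 : 1 + x^3 = 2*x^2 := by linear_combination hx3 - 2*hx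
  have e2 : 1 - x^3 = -(2*x) := by linear_combination -hx3
  rw [e1, e2, Odd.neg_pow ⟨n-1, by omega⟩, sub_neg_eq_add] at hodd
  have c1 : x^(s+3) * (2*x^2)^(2*n-1) = 2^(2*n-1) * x^(4*(n:ℤ)+1+s) := by
    have e : x^(4*(n:ℤ)+1+s) = x^(s+3) * x^((2*(2*n-1):ℕ):ℤ) := by
      rw [← zpow_add₀ hx0]; congr 1; omega
    rw [e, mul_pow, ← pow_mul, ← zpow_natCast x (2*(2*n-1))]
    ring
  have c2 : x^(s+3) * (2*x)^(2*n-1) = 2^(2*n-1) * x^(2*(n:ℤ)+2+s) := by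
    have e : x^(2*(n:ℤ)+2+s) = x^(s+3) * x^((2*n-1:ℕ):ℤ) := by
      rw [← zpow_add₀ hx0]; congr 1; omega
    rw [e, mul_pow, ← zpow_natCast x (2*n-1)]
    ring
  calc 2 * (x^(s+3) * ∑ k ∈ Finset.Icc 1 n, ((2*n-1).choose (2*k-1) : ℝ) * (x^3)^(2*k-1))
      = x^(s+3) * (2 * ∑ k ∈ Finset.Icc 1 n, ((2*n-1).choose (2*k-1) : ℝ) * (x^3)^(2*k-1)) := by
        ring
    _ = x^(s+3) * ((2*x^2)^(2*n-1) + (2*x)^(2*n-1)) := by rw [← hodd]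
    _ = 2^(2*n-1) * (x^(4*(n:ℤ)+1+s) + x^(2*(n:ℤ)+2+s)) := by
        rw [mul_add, c1, c2]; ring

theorem stmt13 (L : ℤ → ℤ) (hL0 : L 0 = 2) (hL1 : L 1 = 1)
    (hL : ∀ j : ℤ, L j = L (j - 1) + L (j - 2)) (n : ℕ) (hn : 0 < n) (s : ℤ) :
    ∑ k ∈ Finset.Icc 1 n, ((2 * n - 1).choose (2 * k - 1) : ℤ) * L (6 * (k : ℤ) + s)
      = 4 ^ (n - 1) * (L (4 * (n : ℤ) + 1 + s) + L (2 * (n : ℤ) + 2 + s)) := by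
  set x : ℝ := (1 + Real.sqrt 5)/2 with hxdef
  set y : ℝ := (1 - Real.sqrt 5)/2 with hydef
  have h5 : Real.sqrt 5 ^ 2 = 5 := Real.sq_sqrt (by norm_num)
  have h5nn : (0:ℝ) ≤ Real.sqrt 5 := Real.sqrt_nonneg 5
  have hx : x^2 = x + 1 := by rw [hxdef]; linear_combination h5/4
  have hy : y^2 = y + 1 := by rw [hydef]; linear_combination h5/4
  have hx0 : x ≠ 0 := by
    intro h
    have : Real.sqrt 5 = -1 := by rw [hxdef] at h; linarith [div_eq_zero_iff.mp h]
    linarith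
  have hy0 : y ≠ 0 := by
    intro h
    have h1 : Real.sqrt 5 = 1 := by
      have := h
      rw [hydef] at this
      field_simp at this
      linarith
    rw [h1] at h5
    norm_num at h5
  have hxy : x + y = 1 := by rw [hxdef, hydef]; ring
  have hbinet := aux_binet L hL x y hx hy hx0 hy0
    (by rw [hL0]; norm_num) (by rw [hL1, hxy]; norm_num)
  have key : ((∑ k ∈ Finset.Icc 1 n, ((2 * n - 1).choose (2 * k - 1) : ℤ) * L (6 * (k : ℤ) + s) : ℤ) : ℝ)
      = ((4 ^ (n - 1) * (L (4 * (n : ℤ) + 1 + s) + L (2 * (n : ℤ) + 2 + s)) : ℤ) : ℝ) := by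
    push_cast
    simp only [hbinet]
    apply mul_left_cancel₀ (two_ne_zero (α := ℝ))
    have split : ∑ k ∈ Finset.Icc 1 n, ((2 * n - 1).choose (2 * k - 1) : ℝ) * (x^(6*(k:ℤ)+s) + y^(6*(k:ℤ)+s))
        = (∑ k ∈ Finset.Icc 1 n, ((2 * n - 1).choose (2 * k - 1) : ℝ) * x^(6*(k:ℤ)+s))
          + ∑ k ∈ Finset.Icc 1 n, ((2 * n - 1).choose (2 * k - 1) : ℝ) * y^(6*(k:ℤ)+s) := by
      rw [← Finset.sum_add_distrib]
      exact Finset.sum_congr rfl fun k _ => by ring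
    rw [split, mul_add, aux_root x hx hx0 n hn s, aux_root y hy hy0 n hn s]
    have h2 : (2:ℝ)^(2*n-1) = 2 * 4^(n-1) := by
      rw [show 2*n-1 = 2*(n-1)+1 from by omega, pow_succ, pow_mul]
      norm_num
      ring
    rw [h2]
    ring
  exact_mod_cast key
end

section
/- For every non-negative integer n and every integer s, 2 * ∑_{k=0}^{n} C(2n, 2k) * F(6k+s) equals 4^n * L(n) * F(3n+s) if n is even, and 4^n * F(n) * L(3n+s) if n is odd. -/
private lemma fstep (F : ℤ → ℤ) (hF : ∀ j : ℤ, F j = F (j - 1) + F (j - 2)) (j : ℤ) :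
    F (j + 2) = F (j + 1) + F j := by
  have h := hF (j + 2)
  rw [show j + 2 - 1 = j + 1 by ring, show j + 2 - 2 = j by ring] at h
  exact h

private lemma LofF (F L : ℤ → ℤ) (hF0 : F 0 = 0) (hF1 : F 1 = 1)
    (hF : ∀ j : ℤ, F j = F (j - 1) + F (j - 2))
    (hL0 : L 0 = 2) (hL1 : L 1 = 1) (hL : ∀ j : ℤ, L j = L (j - 1) + L (j - 2)) :
    ∀ a : ℤ, L a = F (a + 1) + F (a - 1) := by
  have key : ∀ n : ℤ, (L n = F (n + 1) + F (n - 1)) ∧ (L (n + 1) = F (n + 2) + F n) := by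
    intro n
    induction n using Int.induction_on with
    | zero =>
      have h1 := hF 1
      norm_num at h1
      have h2 := fstep F hF 0
      norm_num at h2
      constructor
      · norm_num [hL0, hF1]; linarith
      · norm_num [hL1, hF0]; linarith
    | succ i ih =>
      obtain ⟨h1, h2⟩ := ih
      constructor
      · linear_combination (norm := ring_nf) h2
      · have a1 := fstep F hF ((i : ℤ) + 1)
        have a2 := fstep L hL (i : ℤ)
        have b := hF ((i : ℤ) + 1)
        rw [show (i:ℤ) + 1 - 1 = (i:ℤ) by ring, show (i:ℤ) + 1 - 2 = (i:ℤ) - 1 by ring] at b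
        linear_combination (norm := ring_nf) a2 + h1 + h2 - a1 - b
    | pred i ih =>
      obtain ⟨h1, h2⟩ := ih
      constructor
      · have b1 := hF (-(i : ℤ))
        have b2 := hL (-(i : ℤ) + 1)
        rw [show -(i:ℤ) + 1 - 1 = -(i:ℤ) by ring, show -(i:ℤ) + 1 - 2 = -(i:ℤ) - 1 by ring] at b2
        have b3 := fstep F hF (-(i : ℤ))
        linear_combination (norm := ring_nf) b1 - b2 + b3 - h1 + h2
      · linear_combination (norm := ring_nf) h1
  intro a; exact (key a).1

private lemma addF (F L : ℤ → ℤ) (hF0 : F 0 = 0) (hF1 : F 1 = 1)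
    (hF : ∀ j : ℤ, F j = F (j - 1) + F (j - 2))
    (hL0 : L 0 = 2) (hL1 : L 1 = 1) (hL : ∀ j : ℤ, L j = L (j - 1) + L (j - 2)) :
    ∀ b : ℕ, ∀ a : ℤ,
      (F (a + b) + (-1 : ℤ) ^ b * F (a - b) = F a * L b) ∧
      (F (a + b) - (-1 : ℤ) ^ b * F (a - b) = L a * F b) := by
  have hlf := LofF F L hF0 hF1 hF hL0 hL1 hL
  have key : ∀ b : ℕ,
      (∀ a : ℤ, (F (a + b) + (-1 : ℤ) ^ b * F (a - b) = F a * L b) ∧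
        (F (a + b) - (-1 : ℤ) ^ b * F (a - b) = L a * F b)) ∧
      (∀ a : ℤ, (F (a + (b+1)) + (-1 : ℤ) ^ (b+1) * F (a - (b+1)) = F a * L (b+1)) ∧
        (F (a + (b+1)) - (-1 : ℤ) ^ (b+1) * F (a - (b+1)) = L a * F (b+1))) := by
    intro b
    induction b with
    | zero =>
      constructor
      · intro a
        norm_num [hL0, hF0]
        ring
      · intro a
        have h1 := hF (a + 1)
        rw [show a + 1 - 1 = a by ring, show a + 1 - 2 = a - 1 by ring] at h1
        have h2 := hlf a
        norm_num [hL1, hF1]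
        constructor <;> linarith
    | succ b ih =>
      obtain ⟨ih1, ih2⟩ := ih
      refine ⟨ih2, fun a => ?_⟩
      obtain ⟨e1, e2⟩ := ih1 a
      obtain ⟨e3, e4⟩ := ih2 a
      push_cast at e1 e2 e3 e4 ⊢
      have hA := fstep F hF (a + b)
      have hB := hF (a - b)
      have hL2 := fstep L hL (b : ℤ)
      have hF2 := fstep F hF (b : ℤ)
      constructor
      · linear_combination (norm := ring_nf) hA - (-1:ℤ)^b * hB + e1 + e3 - F a * hL2
      · linear_combination (norm := ring_nf) hA + (-1:ℤ)^b * hB + e2 + e4 - L a * hF2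
  intro b; exact (key b).1

private lemma sumF (F : ℤ → ℤ) (hF : ∀ j : ℤ, F j = F (j - 1) + F (j - 2)) :
    ∀ m : ℕ, ∀ s : ℤ, ∑ j ∈ Finset.range (m + 1), (m.choose j : ℤ) * F (3 * j + s)
      = 2 ^ m * F (2 * m + s) := by
  intro m
  induction m with
  | zero => intro s; norm_num
  | succ m ih =>
    intro s
    have hps := Finset.sum_choose_succ_mul (fun i _ => F (3 * (i : ℤ) + s)) m
    rw [show m + 1 + 1 = m + 2 from rfl]
    rw [hps]
    have h2 : ∑ i ∈ Finset.range (m + 1), (m.choose i : ℤ) * F (3 * ((i : ℤ) + 1) + s)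
        = ∑ i ∈ Finset.range (m + 1), (m.choose i : ℤ) * F (3 * (i : ℤ) + (s + 3)) := by
      apply Finset.sum_congr rfl
      intro i _
      rw [show 3 * ((i : ℤ) + 1) + s = 3 * (i : ℤ) + (s + 3) by ring]
    push_cast
    rw [h2, ih s, ih (s + 3)]
    have a1 := fstep F hF (2 * (m : ℤ) + s)
    have a2 := fstep F hF (2 * (m : ℤ) + s + 1)
    linear_combination (norm := ring_nf) (2:ℤ)^m * a2 - (2:ℤ)^m * a1

private lemma sumAltF (F : ℤ → ℤ) (hF : ∀ j : ℤ, F j = F (j - 1) + F (j - 2)) :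
    ∀ m : ℕ, ∀ s : ℤ, ∑ j ∈ Finset.range (m + 1), (-1 : ℤ)^j * (m.choose j : ℤ) * F (3 * j + s)
      = (-2) ^ m * F (m + s) := by
  intro m
  induction m with
  | zero => intro s; norm_num
  | succ m ih =>
    intro s
    have hps := Finset.sum_choose_succ_mul
      (fun i _ => (-1 : ℤ)^i * F (3 * (i : ℤ) + s)) m
    have hl : ∑ j ∈ Finset.range (m + 1 + 1), (-1 : ℤ)^j * ((m+1).choose j : ℤ) * F (3 * j + s)
        = ∑ j ∈ Finset.range (m + 2), ((m+1).choose j : ℤ) * ((-1 : ℤ)^j * F (3 * (j : ℤ) + s)) := by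
      apply Finset.sum_congr rfl
      intro i _; ring
    rw [hl, hps]
    have h2 : ∑ i ∈ Finset.range (m + 1), (m.choose i : ℤ) * ((-1:ℤ)^(i+1) * F (3 * ((i + 1 : ℕ) : ℤ) + s))
        = -∑ i ∈ Finset.range (m + 1), (-1:ℤ)^i * (m.choose i : ℤ) * F (3 * (i : ℤ) + (s + 3)) := by
      rw [← Finset.sum_neg_distrib]
      apply Finset.sum_congr rfl
      intro i _
      push_cast
      rw [show 3 * ((i : ℤ) + 1) + s = 3 * (i : ℤ) + (s + 3) by ring]
      ring
    have h1 : ∑ i ∈ Finset.range (m + 1), (m.choose i : ℤ) * ((-1:ℤ)^i * F (3 * (i : ℤ) + s))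
        = ∑ i ∈ Finset.range (m + 1), (-1:ℤ)^i * (m.choose i : ℤ) * F (3 * (i : ℤ) + s) := by
      apply Finset.sum_congr rfl; intro i _; ring
    rw [h1, h2, ih s, ih (s + 3)]
    have a1 := fstep F hF ((m : ℤ) + s)
    have a2 := fstep F hF ((m : ℤ) + s + 1)
    push_cast
    linear_combination (norm := ring_nf) (-(-2:ℤ)^m) * a2 - (-2:ℤ)^m * a1

private lemma reindex (g : ℕ → ℤ) : ∀ n : ℕ,
    ∑ j ∈ Finset.range (2 * n + 1), g j + ∑ j ∈ Finset.range (2 * n + 1), (-1 : ℤ)^j * g j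
      = 2 * ∑ k ∈ Finset.range (n + 1), g (2 * k) := by
  intro n
  induction n with
  | zero => simp; ring
  | succ n ih =>
    rw [show 2 * (n + 1) + 1 = (2 * n + 1) + 1 + 1 by ring]
    rw [Finset.sum_range_succ (f := g), Finset.sum_range_succ (f := g),
      Finset.sum_range_succ (f := fun j => (-1:ℤ)^j * g j),
      Finset.sum_range_succ (f := fun j => (-1:ℤ)^j * g j),
      Finset.sum_range_succ (f := fun k => g (2 * k))]
    have s1 : (-1 : ℤ)^(2 * n + 1) = -1 := by
      rw [pow_succ, pow_mul]; norm_num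
    have s2 : (-1 : ℤ)^(2 * n + 1 + 1) = 1 := by
      rw [pow_succ, pow_succ, pow_mul]; norm_num
    rw [s1, s2, show 2 * n + 1 + 1 = 2 * (n + 1) by ring]
    linarith [ih]

theorem stmt14 (F : ℤ → ℤ) (hF0 : F 0 = 0) (hF1 : F 1 = 1)
    (hF : ∀ j : ℤ, F j = F (j - 1) + F (j - 2)) (L : ℤ → ℤ) (hL0 : L 0 = 2) (hL1 : L 1 = 1)
    (hL : ∀ j : ℤ, L j = L (j - 1) + L (j - 2)) (n : ℕ) (s : ℤ) :
    (Even n → 2 * ∑ k ∈ Finset.range (n + 1), ((2 * n).choose (2 * k) : ℤ) * F (6 * (k : ℤ) + s)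
        = 4 ^ n * L (n : ℤ) * F (3 * (n : ℤ) + s)) ∧
    (Odd n → 2 * ∑ k ∈ Finset.range (n + 1), ((2 * n).choose (2 * k) : ℤ) * F (6 * (k : ℤ) + s)
        = 4 ^ n * F (n : ℤ) * L (3 * (n : ℤ) + s)) := by
  set g : ℕ → ℤ := fun j => ((2 * n).choose j : ℤ) * F (3 * j + s) with hg
  have hre := reindex g n
  have hs1 := sumF F hF (2 * n) s
  have hs2 := sumAltF F hF (2 * n) s
  have hlhs : ∑ k ∈ Finset.range (n + 1), ((2 * n).choose (2 * k) : ℤ) * F (6 * (k : ℤ) + s)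
      = ∑ k ∈ Finset.range (n + 1), g (2 * k) := by
    apply Finset.sum_congr rfl
    intro k _
    simp only [hg]
    push_cast
    rw [show 6 * (k : ℤ) + s = 3 * (2 * (k : ℤ)) + s by ring]
  have halt : ∑ j ∈ Finset.range (2 * n + 1), (-1 : ℤ)^j * g j
      = ∑ j ∈ Finset.range (2 * n + 1), (-1 : ℤ)^j * ((2*n).choose j : ℤ) * F (3 * j + s) := by
    apply Finset.sum_congr rfl; intro i _; simp only [hg]; ring
  have p1 : (2 : ℤ) ^ (2 * n) = 4 ^ n := by rw [pow_mul]; norm_num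
  have p2 : ((-2) : ℤ) ^ (2 * n) = 4 ^ n := by rw [pow_mul]; norm_num
  have hmain : 2 * ∑ k ∈ Finset.range (n + 1), ((2 * n).choose (2 * k) : ℤ) * F (6 * (k : ℤ) + s)
      = 4 ^ n * F (4 * (n : ℤ) + s) + 4 ^ n * F (2 * (n : ℤ) + s) := by
    rw [hlhs, ← hre, halt, hs1, hs2, p1, p2]
    push_cast
    ring_nf
  obtain ⟨hadd1, hadd2⟩ := addF F L hF0 hF1 hF hL0 hL1 hL n (3 * (n : ℤ) + s)
  rw [show 3 * (n:ℤ) + s + (n:ℤ) = 4 * (n:ℤ) + s by ring,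
    show 3 * (n:ℤ) + s - (n:ℤ) = 2 * (n:ℤ) + s by ring] at hadd1 hadd2
  constructor
  · intro hev
    rw [hev.neg_one_pow] at hadd1
    linear_combination hmain + 4 ^ n * hadd1
  · intro hodd
    rw [hodd.neg_one_pow] at hadd2
    linear_combination hmain + 4 ^ n * hadd2
end
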